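/- arXiv:1707.03845 — 3 statements merged into one kernel-verified Lean document; each statement's English description precedes it below -/
import Mathlib

section
/- An admissible multidegree (w, μ) on (Γ, 𝐧) is concentrated at a vertex v₀ ∈ V(Γ) if and only if the induced multidegree w̃ on the subdivided graph Γ̃ is concentrated at v₀ (as a multidegree on Γ̃ with the trivial chain structure). -/
open scoped Classical

namespace LLS

variable {V E : Type*}

/-- `σ(e,v)`: `1` if `v` is the tail of `e`, `-1` if `v` is the head of `e`, `0` otherwise. -/
noncomputable def sigma (tail head : E → V) (e : E) (v : V) : ℤ :=
  if tail e = v then 1 else if head e = v then -1 else 0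

/-- The endpoint of `e` other than `v` (for `e` adjacent to `v`). -/
noncomputable def otherEnd (tail head : E → V) (e : E) (v : V) : V :=
  if tail e = v then head e else tail e

/-- The multigraph is loopless. -/
def Loopless (tail head : E → V) : Prop := ∀ e, tail e ≠ head e

/-- The multigraph is connected. -/
def MGConnected (tail head : E → V) : Prop :=
  ∀ u v : V, Relation.ReflTransGen
    (fun a b => ∃ e, (tail e = a ∧ head e = b) ∨ (tail e = b ∧ head e = a)) u v

/-- An admissible multidegree on `(Γ, 𝐧)`: a function `V(Γ) → ℤ` together with an
element `μ(e) ∈ ℤ/𝐧(e)ℤ` for each edge `e`. -/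
structure AdmMD (V E : Type*) (n : E → ℕ) where
  wV : V → ℤ
  mu : ∀ e : E, ZMod (n e)

section FinGraph

variable [Fintype V] [Fintype E] [DecidableEq V] [DecidableEq E]

/-- The twist of an admissible multidegree at a vertex `v`. -/
noncomputable def twist (tail head : E → V) (n : E → ℕ) (w : AdmMD V E n) (v : V) :
    AdmMD V E n where
  wV u := w.wV u
    - (if u = v then ((Finset.univ.filter fun e : E =>
        sigma tail head e v ≠ 0 ∧ w.mu e = 0).card : ℤ) else 0)
    + ((Finset.univ.filter fun e : E => sigma tail head e v ≠ 0 ∧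
        w.mu e + (sigma tail head e v : ZMod (n e)) = 0 ∧
        otherEnd tail head e v = u).card : ℤ)
  mu e := w.mu e + (sigma tail head e v : ZMod (n e))

/-- The negative twist of an admissible multidegree at a vertex `v`
(the inverse of `twist`). -/
noncomputable def negTwist (tail head : E → V) (n : E → ℕ) (w : AdmMD V E n) (v : V) :
    AdmMD V E n where
  wV u := w.wV u
    + (if u = v then ((Finset.univ.filter fun e : E => sigma tail head e v ≠ 0 ∧
        w.mu e - (sigma tail head e v : ZMod (n e)) = 0).card : ℤ) else 0)
    - ((Finset.univ.filter fun e : E => sigma tail head e v ≠ 0 ∧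
        w.mu e = 0 ∧ otherEnd tail head e v = u).card : ℤ)
  mu e := w.mu e - (sigma tail head e v : ZMod (n e))

/-- An admissible multidegree is concentrated at `v` if there is an ordering of all
vertices starting with `v` such that composing the negative twists at all previous
vertices makes the multidegree negative at each subsequent vertex. -/
def Concentrated (tail head : E → V) (n : E → ℕ) (w : AdmMD V E n) (v : V) : Prop :=
  ∃ l : List V, l.Nodup ∧ (∀ x : V, x ∈ l) ∧ l.head? = some v ∧
    ∀ (i : ℕ) (h : i < l.length), 0 < i →
      (((l.take i).foldl (negTwist tail head n) w).wV (l.get ⟨i, h⟩)) < 0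

/-- `w` is obtained from `w₀` by a finite sequence of twists, i.e. `w ∈ V(G(w₀))`. -/
def TwistSeq (tail head : E → V) (n : E → ℕ) (w₀ w : AdmMD V E n) : Prop :=
  ∃ l : List V, l.foldl (twist tail head n) w₀ = w

/-- `l` records the successive twist vertices of a minimal path from `w` to `w'`
in `G(w₀)`. -/
def IsMinPath (tail head : E → V) (n : E → ℕ) (w w' : AdmMD V E n) (l : List V) : Prop :=
  l.foldl (twist tail head n) w = w' ∧
    ∀ l' : List V, l'.foldl (twist tail head n) w = w' → l.length ≤ l'.length

/-- The membership condition describing the subgraph `Ḡ(w₀)` of `G(w₀)`: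
no minimal path from `w` to `w_v` involves twisting at `v`. -/
def InBarG (tail head : E → V) (n : E → ℕ) (w₀ : AdmMD V E n) (wv : V → AdmMD V E n)
    (w : AdmMD V E n) : Prop :=
  TwistSeq tail head n w₀ w ∧
    ∀ (v : V) (l : List V), IsMinPath tail head n w (wv v) l → v ∉ l

/-- Edges joining `v` and `u`. -/
noncomputable def edgesBetween (tail head : E → V) (v u : V) : Finset E :=
  Finset.univ.filter fun e => (tail e = v ∧ head e = u) ∨ (head e = v ∧ tail e = u)

/-- Edges adjacent to `v`. -/
noncomputable def edgesAdj (tail head : E → V) (v : V) : Finset E :=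
  Finset.univ.filter fun e => tail e = v ∨ head e = v

/-- The change of a divisor effected by a single chip-firing move at `v`. -/
noncomputable def fireDelta (tail head : E → V) (v : V) : V → ℤ := fun u =>
  ((edgesBetween tail head v u).card : ℤ)
    - (if u = v then ((edgesAdj tail head v).card : ℤ) else 0)

/-- A chip-firing move (twist) at `v`. -/
noncomputable def chipFire (tail head : E → V) (D : V → ℤ) (v : V) : V → ℤ :=
  fun u => D u + fireDelta tail head v u

/-- The inverse of a chip-firing move at `v`. -/
noncomputable def negChipFire (tail head : E → V) (D : V → ℤ) (v : V) : V → ℤ :=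
  fun u => D u - fireDelta tail head v u

/-- A divisor (multidegree) on a graph is concentrated at `v`. -/
def ConcentratedDiv (tail head : E → V) (D : V → ℤ) (v : V) : Prop :=
  ∃ l : List V, l.Nodup ∧ (∀ x : V, x ∈ l) ∧ l.head? = some v ∧
    ∀ (i : ℕ) (h : i < l.length), 0 < i →
      (((l.take i).foldl (negChipFire tail head) D) (l.get ⟨i, h⟩)) < 0

/-- A divisor on a graph is `v₀`-reduced. -/
def VReduced (tail head : E → V) (D : V → ℤ) (v₀ : V) : Prop :=
  (∀ u, u ≠ v₀ → 0 ≤ D u) ∧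
    ∀ S : Finset V, S.Nonempty → v₀ ∉ S →
      ∃ v ∈ S, D v < ((Finset.univ.filter fun e : E =>
        (tail e = v ∧ head e ∉ S) ∨ (head e = v ∧ tail e ∉ S)).card : ℤ)

/-- The function `D_{w,v}` on edges of `Γ` determined by a path `l` from `w` to `w_v`. -/
noncomputable def DFun (tail head : E → V) (n : E → ℕ) (w : AdmMD V E n) (l : List V)
    (v : V) (et : E) : ℤ :=
  (((Finset.univ : Finset (Fin l.length)).filter fun j =>
      l.get j = otherEnd tail head et v ∧
        ((l.take (j.val + 1)).foldl (twist tail head n) w).mu et = 0).card : ℤ)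
  - (((Finset.univ : Finset (Fin l.length)).filter fun j =>
      l.get j = v ∧ ((l.take j.val).foldl (twist tail head n) w).mu et = 0).card : ℤ)

end FinGraph

/-- The tail map of the subdivided graph `Γ̃`: the edge `e` of `Γ` is subdivided into
`𝐧(e)` edges `(e, j)`, `j = 0, …, 𝐧(e) - 1`, numbered from the tail of `e`; the new
vertices over `e` are `(e, i)`, `i = 0, …, 𝐧(e) - 2`, with `(e, i)` being the
`(i+1)`-st new vertex from the tail of `e`. -/
def tailT (tail head : E → V) (n : E → ℕ) :
    (Σ e : E, Fin (n e)) → V ⊕ Σ e : E, Fin (n e - 1) := fun p =>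
  if h : p.2.val = 0 then Sum.inl (tail p.1)
  else Sum.inr ⟨p.1, ⟨p.2.val - 1, by have := p.2.isLt; omega⟩⟩

/-- The head map of the subdivided graph `Γ̃`. -/
def headT (tail head : E → V) (n : E → ℕ) :
    (Σ e : E, Fin (n e)) → V ⊕ Σ e : E, Fin (n e - 1) := fun p =>
  if h : p.2.val = n p.1 - 1 then Sum.inl (head p.1)
  else Sum.inr ⟨p.1, ⟨p.2.val, by have := p.2.isLt; omega⟩⟩

/-- The multidegree on the subdivided graph `Γ̃` induced by an admissible multidegree:
it agrees with `w` on old vertices, is `1` on the `μ(e)`-th new vertex over `e`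
when `μ(e) ≠ 0`, and is `0` on all other new vertices. -/
noncomputable def inducedMD (n : E → ℕ) (w : AdmMD V E n) :
    (V ⊕ Σ e : E, Fin (n e - 1)) → ℤ
  | Sum.inl v => w.wV v
  | Sum.inr ⟨e, i⟩ => if (w.mu e).val = i.val + 1 then 1 else 0

/-- The simple graph `Γ̄` associated to the multigraph `Γ`: same vertices, one edge
between each pair of adjacent vertices. -/
def barGraph (tail head : E → V) : SimpleGraph V where
  Adj u v := u ≠ v ∧ ∃ e, (tail e = u ∧ head e = v) ∨ (tail e = v ∧ head e = u)
  symm := by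
    constructor
    intro u v h
    exact ⟨h.1.symm, h.2.imp fun e he => he.symm⟩
  loopless := ⟨fun u h => h.1 rfl⟩


section Generic

variable {W F : Type*} [Fintype W] [Fintype F] [DecidableEq W] [DecidableEq F]
variable (t h : F → W)

lemma foldl_negChipFire (l : List W) (D : W → ℤ) (u : W) :
    (l.foldl (negChipFire t h) D) u = D u - ((l.map fun v => fireDelta t h v u).sum) := by
  induction l generalizing D with
  | nil => simp
  | cons a l ih =>
    simp only [List.foldl_cons, List.map_cons, List.sum_cons]
    rw [ih]
    simp only [negChipFire]
    ring

lemma sum_edgesBetween_card (hl : Loopless t h) (q : W → Prop) [DecidablePred q] (x : W)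
    (hqx : ¬ q x) :
    ∑ y ∈ Finset.univ.filter q, (edgesBetween t h y x).card
      = (Finset.univ.filter fun e => (t e = x ∧ q (h e)) ∨ (h e = x ∧ q (t e))).card := by
  have hset : (Finset.univ.filter fun e => (t e = x ∧ q (h e)) ∨ (h e = x ∧ q (t e)))
      = (Finset.univ.filter q).biUnion (fun y => edgesBetween t h y x) := by
    ext e
    simp only [Finset.mem_filter, Finset.mem_univ, true_and, Finset.mem_biUnion, edgesBetween]
    constructor
    · rintro (⟨he, hq⟩ | ⟨he, hq⟩)
      · exact ⟨h e, hq, Or.inr ⟨rfl, he⟩⟩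
      · exact ⟨t e, hq, Or.inl ⟨rfl, he⟩⟩
    · rintro ⟨y, hq, (⟨h1, h2⟩ | ⟨h1, h2⟩)⟩
      · exact Or.inr ⟨h2, h1 ▸ hq⟩
      · exact Or.inl ⟨h2, h1 ▸ hq⟩
  rw [hset, Finset.card_biUnion]
  intro y hy y' hy' hne
  simp only [Finset.mem_coe, Finset.mem_filter, Finset.mem_univ, true_and] at hy hy'
  refine Finset.disjoint_left.2 ?_
  intro e he he'
  simp only [edgesBetween, Finset.mem_filter, Finset.mem_univ, true_and] at he he'
  rcases he with ⟨h1, h2⟩ | ⟨h1, h2⟩ <;> rcases he' with ⟨h1', h2'⟩ | ⟨h1', h2'⟩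
  · exact hne (h1 ▸ h1')
  · exact hqx (h2' ▸ (h1 ▸ hy))
  · exact hqx (h2 ▸ (h1' ▸ hy'))
  · exact hne (h1 ▸ h1')

lemma get_not_mem_take (l : List W) (hl : l.Nodup) (i : ℕ) (hi : i < l.length) :
    l.get ⟨i, hi⟩ ∉ l.take i := by
  intro hmem
  rw [List.mem_take_iff_getElem] at hmem
  obtain ⟨j, hj, hje⟩ := hmem
  have hj' : j < l.length := lt_of_lt_of_le hj (min_le_right _ _)
  have : j = i := by
    have := (hl.getElem_inj_iff (hi := hj') (hj := hi)).1 (by simpa using hje)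
    omega
  omega

lemma foldl_take_eval (l : List W) (hl : l.Nodup) (D : W → ℤ) (i : ℕ) (hi : i < l.length) :
    ((l.take i).foldl (negChipFire t h) D) (l.get ⟨i, hi⟩)
      = D (l.get ⟨i, hi⟩)
        - ∑ y ∈ (l.take i).toFinset, ((edgesBetween t h y (l.get ⟨i, hi⟩)).card : ℤ) := by
  set x := l.get ⟨i, hi⟩ with hx
  rw [foldl_negChipFire]
  congr 1
  rw [← List.sum_toFinset _ ((hl.sublist (List.take_sublist i l)))]
  apply Finset.sum_congr rfl
  intro y hy
  rw [List.mem_toFinset] at hy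
  have hyx : x ≠ y := by
    intro hxy
    subst hxy
    exact get_not_mem_take l hl i hi hy
  simp [fireDelta, if_neg hyx]

end Generic
section Generic2

variable {W F : Type*} [Fintype W] [Fintype F] [DecidableEq W] [DecidableEq F]
variable (t h : F → W)

lemma mem_take_iff_indexOf {l : List W} (hl : l.Nodup) {y : W} (hy : y ∈ l) (i : ℕ) :
    y ∈ l.take i ↔ l.idxOf y < i := by
  constructor
  · intro hmem
    rw [List.mem_take_iff_getElem] at hmem
    obtain ⟨j, hj, hje⟩ := hmem
    have hj' : j < l.length := lt_of_lt_of_le hj (min_le_right _ _)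
    have hidx : l.idxOf y < l.length := List.idxOf_lt_length_iff.2 hy
    have : l[l.idxOf y] = l[j] := by
      rw [List.getElem_idxOf hidx, hje]
    have := (hl.getElem_inj_iff (hi := hidx) (hj := hj')).1 this
    omega
  · intro hlt
    rw [List.mem_take_iff_getElem]
    have hidx : l.idxOf y < l.length := List.idxOf_lt_length_iff.2 hy
    exact ⟨l.idxOf y, lt_min hlt hidx, List.getElem_idxOf hidx⟩

lemma exists_good_list (pos : W → ℕ) (v₀ : W) (h0 : ∀ x, pos x = 0 ↔ x = v₀) :
    ∃ l : List W, l.Nodup ∧ (∀ x, x ∈ l) ∧ l.head? = some v₀ ∧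
      ∀ (i : ℕ) (hi : i < l.length) (y : W), pos y < pos (l.get ⟨i, hi⟩) → y ∈ l.take i := by
  classical
  set N := Fintype.card W with hN
  set ι : W → ℕ := fun x => (Fintype.equivFin W x : ℕ) with hιdef
  have hι : ∀ x, ι x < N := fun x => (Fintype.equivFin W x).isLt
  have hιinj : Function.Injective ι := fun a b hab => by
    have : Fintype.equivFin W a = Fintype.equivFin W b := Fin.ext hab
    exact (Fintype.equivFin W).injective this
  set P : W → ℕ := fun x => if x = v₀ then 0 else pos x * (N + 1) + ι x + 1 with hPdef
  have hP0 : ∀ x, P x = 0 ↔ x = v₀ := by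
    intro x
    by_cases hx : x = v₀ <;> simp [hPdef, hx]
  have hPinj : Function.Injective P := by
    intro a b hab
    by_cases ha : a = v₀ <;> by_cases hb : b = v₀
    · exact ha.trans hb.symm
    · exfalso; simp [hPdef, ha, hb] at hab
    · exfalso; simp [hPdef, ha, hb] at hab
    · simp only [hPdef, if_neg ha, if_neg hb] at hab
      have hab' : pos a * (N + 1) + (ι a + 1) = pos b * (N + 1) + (ι b + 1) := by omega
      have hma : (pos a * (N + 1) + (ι a + 1)) % (N + 1) = ι a + 1 := by
        rw [Nat.add_comm, Nat.add_mul_mod_self_right, Nat.mod_eq_of_lt (by have := hι a; omega)]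
      have hmb : (pos b * (N + 1) + (ι b + 1)) % (N + 1) = ι b + 1 := by
        rw [Nat.add_comm, Nat.add_mul_mod_self_right, Nat.mod_eq_of_lt (by have := hι b; omega)]
      rw [hab', hmb] at hma
      exact hιinj (by omega)
  have hmono : ∀ x y, x ≠ v₀ → pos y < pos x → P y < P x := by
    intro x y hx hxy
    by_cases hy : y = v₀
    · simp only [hPdef, if_pos hy, if_neg hx]
      exact Nat.succ_pos _
    · simp only [hPdef, if_neg hx, if_neg hy]
      have h2 : pos y + 1 ≤ pos x := hxy
      have h3 : (pos y + 1) * (N + 1) ≤ pos x * (N + 1) := Nat.mul_le_mul_right _ h2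
      have h4 : pos y * (N + 1) + ι y + 1 < (pos y + 1) * (N + 1) := by
        have h5 : ι y + 1 < N + 1 := by have := hι y; omega
        have : (pos y + 1) * (N + 1) = pos y * (N + 1) + (N + 1) := by ring
        omega
      omega
  let r : W → W → Prop := fun a b => P a ≤ P b
  letI : DecidableRel r := fun a b => Nat.decLe _ _
  haveI : IsTrans W r := ⟨fun a b c => Nat.le_trans⟩
  haveI : Std.Antisymm r := ⟨fun a b h1 h2 => hPinj (Nat.le_antisymm h1 h2)⟩
  haveI : Std.Total r := ⟨fun a b => Nat.le_total _ _⟩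
  haveI : Std.Refl r := ⟨fun a => Nat.le_refl _⟩
  refine ⟨Finset.univ.sort r, Finset.sort_nodup _ r, ?_, ?_, ?_⟩
  · exact fun x => (Finset.mem_sort r).2 (Finset.mem_univ x)
  · set l := Finset.univ.sort r with hldef
    have hmem : ∀ x : W, x ∈ l := fun x => (Finset.mem_sort r).2 (Finset.mem_univ x)
    have hsort : l.Pairwise r := Finset.pairwise_sort _ r
    obtain ⟨a, l', hl'⟩ := List.exists_cons_of_ne_nil (List.ne_nil_of_mem (hmem v₀))
    rw [hl']
    have hv : v₀ ∈ a :: l' := hl' ▸ hmem v₀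
    rcases List.mem_cons.1 hv with hva | hvl
    · rw [hva]; rfl
    · have : r a v₀ := (List.pairwise_cons.1 (hl' ▸ hsort)).1 v₀ hvl
      have : P a ≤ 0 := by
        have : P v₀ = 0 := (hP0 v₀).2 rfl
        omega
      have : a = v₀ := (hP0 a).1 (by omega)
      rw [this]; rfl
  · set l := Finset.univ.sort r with hldef
    have hmem : ∀ x : W, x ∈ l := fun x => (Finset.mem_sort r).2 (Finset.mem_univ x)
    have hnd : l.Nodup := Finset.sort_nodup _ r
    have hsort : l.Pairwise r := Finset.pairwise_sort _ r
    intro i hi y hy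
    set x := l.get ⟨i, hi⟩ with hx
    by_cases hxv : x = v₀
    · exfalso
      have : pos x = 0 := (h0 x).2 hxv
      omega
    have hPyx : P y < P x := hmono x y hxv hy
    have hjlen : l.idxOf y < l.length := List.idxOf_lt_length_iff.2 (hmem y)
    by_contra hnmem
    have hij : i ≤ l.idxOf y := by
      by_contra hlt
      exact hnmem ((mem_take_iff_indexOf hnd (hmem y) i).2 (by omega))
    have hr : r x (l.get ⟨l.idxOf y, hjlen⟩) :=
      hsort.rel_get_of_le (by exact hij : (⟨i, hi⟩ : Fin l.length) ≤ ⟨l.idxOf y, hjlen⟩)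
    rw [List.idxOf_get] at hr
    exact absurd hPyx (by exact Nat.not_lt.2 hr)

end Generic2
section Generic3

variable {W F : Type*} [Fintype W] [Fintype F] [DecidableEq W] [DecidableEq F]
variable (t h : F → W)

lemma concDiv_to_pos (hlp : Loopless t h) (D : W → ℤ) (v₀ : W)
    (hc : ConcentratedDiv t h D v₀) :
    ∃ pos : W → ℕ, Function.Injective pos ∧ (∀ x, pos x = 0 ↔ x = v₀) ∧
      ∀ x, pos x ≠ 0 → D x < ((Finset.univ.filter fun e =>
        (t e = x ∧ pos (h e) < pos x) ∨ (h e = x ∧ pos (t e) < pos x)).card : ℤ) := by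
  obtain ⟨l, hnd, hcomp, hhead, hcond⟩ := hc
  refine ⟨fun x => l.idxOf x, ?_, ?_, ?_⟩
  · intro a b hab
    exact (List.idxOf_inj (hcomp a)).1 hab
  · intro x
    show l.idxOf x = 0 ↔ x = v₀
    obtain ⟨a, l', rfl⟩ := List.exists_cons_of_ne_nil (List.ne_nil_of_mem (hcomp x))
    have ha : a = v₀ := by simpa using hhead
    rw [← ha]
    by_cases hx : x = a
    · subst hx; simp
    · rw [List.idxOf_cons_ne _ (fun hh => hx hh.symm)]
      simp [hx]
  · intro x hx
    have hx' : l.idxOf x ≠ 0 := hx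
    have hmemx : x ∈ l := hcomp x
    set i := l.idxOf x with hidef
    have hi : i < l.length := List.idxOf_lt_length_iff.2 hmemx
    have hget : l.get ⟨i, hi⟩ = x := List.idxOf_get hi
    have hval := hcond i hi (by omega)
    rw [foldl_take_eval t h l hnd D i hi, hget] at hval
    have hseteq : (l.take i).toFinset = Finset.univ.filter (fun y => l.idxOf y < i) := by
      ext y
      simp only [List.mem_toFinset, Finset.mem_filter, Finset.mem_univ, true_and]
      exact mem_take_iff_indexOf hnd (hcomp y) i
    rw [hseteq] at hval
    have hcast : ∑ y ∈ Finset.univ.filter (fun y => l.idxOf y < i),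
        ((edgesBetween t h y x).card : ℤ)
        = ((∑ y ∈ Finset.univ.filter (fun y => l.idxOf y < i),
            (edgesBetween t h y x).card : ℕ) : ℤ) := by
      push_cast
      rfl
    rw [hcast, sum_edgesBetween_card t h hlp (fun y => l.idxOf y < i) x (by omega)] at hval
    show D x < ((Finset.univ.filter fun e =>
        (t e = x ∧ l.idxOf (h e) < l.idxOf x) ∨
          (h e = x ∧ l.idxOf (t e) < l.idxOf x)).card : ℤ)
    rw [← hidef]
    omega

lemma pos_to_concDiv (hlp : Loopless t h) (D : W → ℤ) (v₀ : W) (pos : W → ℕ)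
    (h0 : ∀ x, pos x = 0 ↔ x = v₀)
    (hcond : ∀ x, pos x ≠ 0 → D x < ((Finset.univ.filter fun e =>
        (t e = x ∧ pos (h e) < pos x) ∨ (h e = x ∧ pos (t e) < pos x)).card : ℤ)) :
    ConcentratedDiv t h D v₀ := by
  obtain ⟨l, hnd, hcomp, hhead, hgood⟩ := exists_good_list pos v₀ h0
  refine ⟨l, hnd, hcomp, hhead, ?_⟩
  intro i hi hipos
  set x := l.get ⟨i, hi⟩ with hx
  have hxv : x ≠ v₀ := by
    intro hxv
    have h0lt : 0 < l.length := List.length_pos_iff.2 (List.ne_nil_of_mem (hcomp v₀))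
    have hv0 : l.get ⟨0, h0lt⟩ = v₀ := by
      cases l with
      | nil => simp at hhead
      | cons a l' =>
        show a = v₀
        simpa using hhead
    have hne : (⟨i, hi⟩ : Fin l.length) = ⟨0, h0lt⟩ := by
      apply hnd.get_inj_iff.1
      rw [hv0, ← hxv]
    simp only [Fin.mk.injEq] at hne
    omega
  have hpos : pos x ≠ 0 := fun h => hxv ((h0 x).1 h)
  rw [foldl_take_eval t h l hnd D i hi, ← hx]
  have hsub : Finset.univ.filter (fun y => pos y < pos x) ⊆ (l.take i).toFinset := by
    intro y hy
    simp only [Finset.mem_filter, Finset.mem_univ, true_and] at hy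
    exact List.mem_toFinset.2 (hgood i hi y hy)
  have hle : ∑ y ∈ Finset.univ.filter (fun y => pos y < pos x),
      ((edgesBetween t h y x).card : ℤ)
      ≤ ∑ y ∈ (l.take i).toFinset, ((edgesBetween t h y x).card : ℤ) := by
    apply Finset.sum_le_sum_of_subset_of_nonneg hsub
    intro _ _ _
    positivity
  have hval := hcond x hpos
  have hcast : ∑ y ∈ Finset.univ.filter (fun y => pos y < pos x),
      ((edgesBetween t h y x).card : ℤ)
      = ((∑ y ∈ Finset.univ.filter (fun y => pos y < pos x),
          (edgesBetween t h y x).card : ℕ) : ℤ) := by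
    push_cast
    rfl
  rw [hcast, sum_edgesBetween_card t h hlp (fun y => pos y < pos x) x (by omega)] at hle
  omega

end Generic3
section ChainLemmas

variable [Fintype V] [Fintype E] [DecidableEq V] [DecidableEq E]
variable (tail head : E → V) (n : E → ℕ)

lemma foldl_negTwist_wV (hlp : Loopless tail head) (l : List V) (hl : l.Nodup) (u : V)
    (hu : u ∉ l) (w : AdmMD V E n) :
    (l.foldl (negTwist tail head n) w).wV u
      = w.wV u - ((Finset.univ.filter fun e =>
          ((tail e = u ∧ head e ∈ l) ∨ (head e = u ∧ tail e ∈ l)) ∧ w.mu e = 0).card : ℤ) := by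
  induction l generalizing w with
  | nil => simp
  | cons a l ih =>
    have ha : a ∉ l := (List.nodup_cons.1 hl).1
    have hl' : l.Nodup := (List.nodup_cons.1 hl).2
    have hu1 : u ≠ a := fun h => hu (h ▸ List.mem_cons_self)
    have hu2 : u ∉ l := fun h => hu (List.mem_cons_of_mem a h)
    rw [List.foldl_cons, ih hl' hu2]
    have hmu : ∀ e : E, (tail e = u ∧ head e ∈ l) ∨ (head e = u ∧ tail e ∈ l) →
        (negTwist tail head n w a).mu e = w.mu e := by
      intro e he
      have hta : tail e ≠ a := by
        rcases he with ⟨h1, h2⟩ | ⟨h1, h2⟩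
        · exact h1 ▸ hu1
        · exact fun hh => ha (hh ▸ h2)
      have hha : head e ≠ a := by
        rcases he with ⟨h1, h2⟩ | ⟨h1, h2⟩
        · exact fun hh => ha (hh ▸ h2)
        · exact h1 ▸ hu1
      show w.mu e - ((sigma tail head e a : ℤ) : ZMod (n e)) = w.mu e
      rw [sigma, if_neg hta, if_neg hha]
      simp
    have hC : (Finset.univ.filter fun e =>
          ((tail e = u ∧ head e ∈ l) ∨ (head e = u ∧ tail e ∈ l)) ∧
            (negTwist tail head n w a).mu e = 0)
        = (Finset.univ.filter fun e =>
          ((tail e = u ∧ head e ∈ l) ∨ (head e = u ∧ tail e ∈ l)) ∧ w.mu e = 0) := by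
      apply Finset.filter_congr
      intro e _
      constructor
      · rintro ⟨h1, h2⟩; exact ⟨h1, (hmu e h1) ▸ h2⟩
      · rintro ⟨h1, h2⟩; exact ⟨h1, (hmu e h1).symm ▸ h2⟩
    rw [hC]
    have hwv : (negTwist tail head n w a).wV u
        = w.wV u - ((Finset.univ.filter fun e =>
            ((tail e = u ∧ head e = a) ∨ (head e = u ∧ tail e = a)) ∧ w.mu e = 0).card : ℤ) := by
      show w.wV u + (if u = a then _ else 0) - _ = _
      rw [if_neg hu1]
      have hB : (Finset.univ.filter fun e => sigma tail head e a ≠ 0 ∧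
            w.mu e = 0 ∧ otherEnd tail head e a = u)
          = (Finset.univ.filter fun e =>
            ((tail e = u ∧ head e = a) ∨ (head e = u ∧ tail e = a)) ∧ w.mu e = 0) := by
        apply Finset.filter_congr
        intro e _
        by_cases hta : tail e = a
        · have hha : head e ≠ a := fun hh => hlp e (hta.trans hh.symm)
          rw [sigma, if_pos hta, otherEnd, if_pos hta]
          constructor
          · rintro ⟨-, h2, h3⟩
            exact ⟨Or.inr ⟨h3, hta⟩, h2⟩
          · rintro ⟨h1, h2⟩
            rcases h1 with ⟨h3, h4⟩ | ⟨h3, h4⟩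
            · exact absurd (h3.symm.trans hta) hu1
            · exact ⟨one_ne_zero, h2, h3⟩
        · by_cases hha : head e = a
          · rw [sigma, if_neg hta, if_pos hha, otherEnd, if_neg hta]
            constructor
            · rintro ⟨-, h2, h3⟩
              exact ⟨Or.inl ⟨h3, hha⟩, h2⟩
            · rintro ⟨h1, h2⟩
              rcases h1 with ⟨h3, h4⟩ | ⟨h3, h4⟩
              · exact ⟨by norm_num, h2, h3⟩
              · exact absurd (h3.symm.trans hha) hu1
          · rw [sigma, if_neg hta, if_neg hha]
            constructor
            · rintro ⟨h1, -⟩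
              exact absurd rfl h1
            · rintro ⟨h1, h2⟩
              rcases h1 with ⟨h3, h4⟩ | ⟨h3, h4⟩ <;> [exact absurd h4 hha; exact absurd h4 hta]
      rw [hB]
      ring
    rw [hwv]
    have hsplit : (Finset.univ.filter fun e =>
          ((tail e = u ∧ head e ∈ a :: l) ∨ (head e = u ∧ tail e ∈ a :: l)) ∧ w.mu e = 0)
        = (Finset.univ.filter fun e =>
            ((tail e = u ∧ head e = a) ∨ (head e = u ∧ tail e = a)) ∧ w.mu e = 0)
          ∪ (Finset.univ.filter fun e =>
            ((tail e = u ∧ head e ∈ l) ∨ (head e = u ∧ tail e ∈ l)) ∧ w.mu e = 0) := by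
      rw [← Finset.filter_or]
      apply Finset.filter_congr
      intro e _
      simp only [List.mem_cons]
      tauto
    have hdisj : Disjoint (Finset.univ.filter fun e =>
            ((tail e = u ∧ head e = a) ∨ (head e = u ∧ tail e = a)) ∧ w.mu e = 0)
          (Finset.univ.filter fun e =>
            ((tail e = u ∧ head e ∈ l) ∨ (head e = u ∧ tail e ∈ l)) ∧ w.mu e = 0) := by
      refine Finset.disjoint_left.2 fun e he1 he2 => ?_
      simp only [Finset.mem_filter, Finset.mem_univ, true_and] at he1 he2
      rcases he1.1 with ⟨h1, h2⟩ | ⟨h1, h2⟩ <;> rcases he2.1 with ⟨h3, h4⟩ | ⟨h3, h4⟩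
      · exact ha (h2 ▸ h4)
      · exact hu1 (h3.symm.trans h2)
      · exact hu1 (h3.symm.trans h2)
      · exact ha (h2 ▸ h4)
    rw [hsplit, Finset.card_union_of_disjoint hdisj]
    push_cast
    ring
  
lemma foldl_negTwist_take (hlp : Loopless tail head) (w : AdmMD V E n) (l : List V)
    (hl : l.Nodup) (i : ℕ) (hi : i < l.length) :
    ((l.take i).foldl (negTwist tail head n) w).wV (l.get ⟨i, hi⟩)
      = w.wV (l.get ⟨i, hi⟩) - ((Finset.univ.filter fun e =>
          ((tail e = l.get ⟨i, hi⟩ ∧ head e ∈ l.take i) ∨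
            (head e = l.get ⟨i, hi⟩ ∧ tail e ∈ l.take i)) ∧ w.mu e = 0).card : ℤ) :=
  foldl_negTwist_wV tail head n hlp (l.take i) (hl.sublist (List.take_sublist i l))
    (l.get ⟨i, hi⟩) (get_not_mem_take l hl i hi) w

lemma conc_to_pos (hlp : Loopless tail head) (w : AdmMD V E n) (v₀ : V)
    (hc : Concentrated tail head n w v₀) :
    ∃ pos : V → ℕ, Function.Injective pos ∧ (∀ x, pos x = 0 ↔ x = v₀) ∧
      ∀ u, pos u ≠ 0 → w.wV u < ((Finset.univ.filter fun e =>
        ((tail e = u ∧ pos (head e) < pos u) ∨ (head e = u ∧ pos (tail e) < pos u)) ∧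
          w.mu e = 0).card : ℤ) := by
  obtain ⟨l, hnd, hcomp, hhead, hcond⟩ := hc
  refine ⟨fun x => l.idxOf x, ?_, ?_, ?_⟩
  · intro a b hab
    exact (List.idxOf_inj (hcomp a)).1 hab
  · intro x
    show l.idxOf x = 0 ↔ x = v₀
    obtain ⟨a, l', rfl⟩ := List.exists_cons_of_ne_nil (List.ne_nil_of_mem (hcomp x))
    have ha : a = v₀ := by simpa using hhead
    rw [← ha]
    by_cases hx : x = a
    · subst hx; simp
    · rw [List.idxOf_cons_ne _ (fun hh => hx hh.symm)]
      simp [hx]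
  · intro u hu
    have hu' : l.idxOf u ≠ 0 := hu
    have hmemu : u ∈ l := hcomp u
    set i := l.idxOf u with hidef
    have hi : i < l.length := List.idxOf_lt_length_iff.2 hmemu
    have hget : l.get ⟨i, hi⟩ = u := List.idxOf_get hi
    have hval := hcond i hi (by omega)
    rw [foldl_negTwist_take tail head n hlp w l hnd i hi, hget] at hval
    have hfeq : (Finset.univ.filter fun e =>
          ((tail e = u ∧ head e ∈ l.take i) ∨ (head e = u ∧ tail e ∈ l.take i)) ∧ w.mu e = 0)
        = (Finset.univ.filter fun e =>
          ((tail e = u ∧ l.idxOf (head e) < l.idxOf u) ∨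
            (head e = u ∧ l.idxOf (tail e) < l.idxOf u)) ∧ w.mu e = 0) := by
      apply Finset.filter_congr
      intro e _
      rw [← hidef, mem_take_iff_indexOf hnd (hcomp (head e)) i,
        mem_take_iff_indexOf hnd (hcomp (tail e)) i]
    rw [hfeq] at hval
    show w.wV u < ((Finset.univ.filter fun e =>
        ((tail e = u ∧ l.idxOf (head e) < l.idxOf u) ∨
          (head e = u ∧ l.idxOf (tail e) < l.idxOf u)) ∧ w.mu e = 0).card : ℤ)
    omega

lemma pos_to_conc (hlp : Loopless tail head) (w : AdmMD V E n) (v₀ : V) (pos : V → ℕ)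
    (h0 : ∀ x, pos x = 0 ↔ x = v₀)
    (hcond : ∀ u, pos u ≠ 0 → w.wV u < ((Finset.univ.filter fun e =>
        ((tail e = u ∧ pos (head e) < pos u) ∨ (head e = u ∧ pos (tail e) < pos u)) ∧
          w.mu e = 0).card : ℤ)) :
    Concentrated tail head n w v₀ := by
  obtain ⟨l, hnd, hcomp, hhead, hgood⟩ := exists_good_list pos v₀ h0
  refine ⟨l, hnd, hcomp, hhead, ?_⟩
  intro i hi hipos
  set x := l.get ⟨i, hi⟩ with hx
  have hxv : x ≠ v₀ := by
    intro hxv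
    have h0lt : 0 < l.length := List.length_pos_iff.2 (List.ne_nil_of_mem (hcomp v₀))
    have hv0 : l.get ⟨0, h0lt⟩ = v₀ := by
      cases l with
      | nil => simp at hhead
      | cons a l' =>
        show a = v₀
        simpa using hhead
    have hne : (⟨i, hi⟩ : Fin l.length) = ⟨0, h0lt⟩ := by
      apply hnd.get_inj_iff.1
      rw [hv0, ← hxv]
    simp only [Fin.mk.injEq] at hne
    omega
  have hpos : pos x ≠ 0 := fun h => hxv ((h0 x).1 h)
  rw [foldl_negTwist_take tail head n hlp w l hnd i hi, ← hx]
  have hsub : (Finset.univ.filter fun e =>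
        ((tail e = x ∧ pos (head e) < pos x) ∨ (head e = x ∧ pos (tail e) < pos x)) ∧
          w.mu e = 0)
      ⊆ (Finset.univ.filter fun e =>
        ((tail e = x ∧ head e ∈ l.take i) ∨ (head e = x ∧ tail e ∈ l.take i)) ∧
          w.mu e = 0) := by
    intro e he
    simp only [Finset.mem_filter, Finset.mem_univ, true_and] at he ⊢
    refine ⟨?_, he.2⟩
    rcases he.1 with ⟨h1, h2⟩ | ⟨h1, h2⟩
    · exact Or.inl ⟨h1, hgood i hi _ h2⟩
    · exact Or.inr ⟨h1, hgood i hi _ h2⟩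
  have hcard := Finset.card_le_card hsub
  have hval := hcond x hpos
  omega

end ChainLemmas
section TildeBasic

variable [Fintype V] [Fintype E] [DecidableEq V] [DecidableEq E]

/-- The vertex of the subdivided graph at distance `t` from the tail along edge `e`. -/
def cV (tail head : E → V) (n : E → ℕ) (e : E) (t : ℕ) : V ⊕ Σ e : E, Fin (n e - 1) :=
  if h1 : t = 0 then Sum.inl (tail e)
  else if h2 : t < n e then Sum.inr ⟨e, ⟨t - 1, by omega⟩⟩
  else Sum.inl (head e)

variable (tail head : E → V) (n : E → ℕ)

lemma cV_zero (e : E) : cV tail head n e 0 = Sum.inl (tail e) := by simp [cV]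

lemma cV_last (e : E) (t : ℕ) (h : n e ≤ t) (hn : 0 < n e) :
    cV tail head n e t = Sum.inl (head e) := by
  rw [cV, dif_neg (by omega), dif_neg (by omega)]

lemma cV_mid (e : E) (t : ℕ) (h1 : 1 ≤ t) (h2 : t < n e) :
    cV tail head n e t = Sum.inr ⟨e, ⟨t - 1, by omega⟩⟩ := by
  rw [cV, dif_neg (by omega), dif_pos h2]

lemma tailT_eq (e : E) (j : Fin (n e)) :
    tailT tail head n ⟨e, j⟩ = cV tail head n e j.val := by
  by_cases hj : j.val = 0
  · rw [tailT]
    simp only [hj, cV]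
    rfl
  · rw [tailT, cV]
    have := j.isLt
    rw [dif_neg hj, dif_neg hj, dif_pos this]

lemma headT_eq (e : E) (j : Fin (n e)) :
    headT tail head n ⟨e, j⟩ = cV tail head n e (j.val + 1) := by
  have hjl := j.isLt
  by_cases hj : j.val = n e - 1
  · rw [headT, cV]
    rw [dif_pos hj, dif_neg (by omega), dif_neg (by omega)]
  · rw [headT, cV]
    rw [dif_neg hj, dif_neg (by omega), dif_pos (by omega)]
    simp

lemma cV_eq_inr (e e' : E) (t : ℕ) (i : Fin (n e' - 1))
    (h : cV tail head n e t = Sum.inr ⟨e', i⟩) : e = e' ∧ t = i.val + 1 := by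
  rw [cV] at h
  by_cases h1 : t = 0
  · rw [dif_pos h1] at h
    exact absurd h (by simp)
  by_cases h2 : t < n e
  · rw [dif_neg h1, dif_pos h2] at h
    injection h with h'
    obtain ⟨rfl, h3⟩ := Sigma.mk.inj_iff.1 h'
    have h4 : (⟨t - 1, by omega⟩ : Fin (n e - 1)) = i := eq_of_heq h3
    refine ⟨rfl, ?_⟩
    have h5 : t - 1 = i.val := by rw [← h4]
    omega
  · rw [dif_neg h1, dif_neg h2] at h
    exact absurd h (by simp)

lemma cV_eq_inl (e : E) (t : ℕ) (u : V) (hn : 0 < n e)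
    (h : cV tail head n e t = Sum.inl u) :
    (t = 0 ∧ tail e = u) ∨ (n e ≤ t ∧ head e = u) := by
  rw [cV] at h
  by_cases h1 : t = 0
  · rw [dif_pos h1] at h
    injection h with h'
    exact Or.inl ⟨h1, h'⟩
  by_cases h2 : t < n e
  · rw [dif_neg h1, dif_pos h2] at h
    exact absurd h (by simp)
  · rw [dif_neg h1, dif_neg h2] at h
    injection h with h'
    exact Or.inr ⟨by omega, h'⟩

lemma cV_ne (e : E) (s t : ℕ) (hs : s ≤ n e) (ht : t ≤ n e) (hst : s < t)
    (hn0 : 0 < n e) (hlp : tail e ≠ head e) :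
    cV tail head n e s ≠ cV tail head n e t := by
  intro h
  by_cases hs0 : s = 0
  · subst hs0
    rw [cV_zero] at h
    by_cases htn : t < n e
    · rw [cV_mid tail head n e t (by omega) htn] at h
      exact absurd h (by simp)
    · rw [cV_last tail head n e t (by omega) hn0] at h
      exact hlp (by injection h)
  · by_cases hsn : s < n e
    · rw [cV_mid tail head n e s (by omega) hsn] at h
      by_cases htn : t < n e
      · rw [cV_mid tail head n e t (by omega) htn] at h
        injection h with h'
        have h2 := Sigma.mk.inj_iff.1 h'
        have h3 : (⟨s - 1, by omega⟩ : Fin (n e - 1)) = ⟨t - 1, by omega⟩ := eq_of_heq h2.2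
        have : s - 1 = t - 1 := by
          have := Fin.mk.injEq .. ▸ h3
          rw [Fin.mk.injEq] at h3
          omega
        omega
      · rw [cV_last tail head n e t (by omega) hn0] at h
        exact absurd h (by simp)
    · omega

lemma looplessT (hlp : Loopless tail head) (hn : ∀ e, 0 < n e) :
    Loopless (tailT tail head n) (headT tail head n) := by
  rintro ⟨e, j⟩
  rw [tailT_eq, headT_eq]
  exact cV_ne tail head n e j.val (j.val + 1) (by have := j.isLt; omega)
    (by have := j.isLt; omega) (by omega) (hn e) (hlp e)

lemma inducedMD_cV (w : AdmMD V E n) (e : E) (t : ℕ) (h1 : 1 ≤ t) (h2 : t < n e) :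
    inducedMD n w (cV tail head n e t) = if (w.mu e).val = t then 1 else 0 := by
  rw [cV_mid tail head n e t h1 h2]
  show (if (w.mu e).val = (t - 1) + 1 then (1 : ℤ) else 0) = _
  congr 1
  rw [eq_iff_iff]
  omega

end TildeBasic
section Burn

variable [Fintype V] [Fintype E] [DecidableEq V] [DecidableEq E]
variable (tail head : E → V) (n : E → ℕ)

lemma burn_step_tail (hlp : Loopless tail head) (hn : ∀ e, 0 < n e) (w : AdmMD V E n) (v₀ : V)
    (P : (V ⊕ Σ e : E, Fin (n e - 1)) → ℕ)
    (hP0 : ∀ x, P x = 0 ↔ x = Sum.inl v₀)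
    (hcond : ∀ x, P x ≠ 0 → inducedMD n w x < ((Finset.univ.filter fun ed : (Σ e : E, Fin (n e)) =>
      (tailT tail head n ed = x ∧ P (headT tail head n ed) < P x) ∨
        (headT tail head n ed = x ∧ P (tailT tail head n ed) < P x)).card : ℤ))
    (e : E) (t : ℕ) (h1 : 1 ≤ t) (h2 : t < n e)
    (hlt : P (cV tail head n e t) < P (cV tail head n e (t - 1))) :
    (w.mu e).val ≠ t ∧ P (cV tail head n e (t + 1)) < P (cV tail head n e t) := by
  set x := cV tail head n e t with hx
  have hxinr : x = Sum.inr ⟨e, ⟨t - 1, by omega⟩⟩ := cV_mid tail head n e t h1 h2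
  have hPx : P x ≠ 0 := by
    intro h0
    have := (hP0 x).1 h0
    rw [hxinr] at this
    exact absurd this (by simp)
  have hc := hcond x hPx
  set F := (Finset.univ.filter fun ed : (Σ e : E, Fin (n e)) =>
      (tailT tail head n ed = x ∧ P (headT tail head n ed) < P x) ∨
        (headT tail head n ed = x ∧ P (tailT tail head n ed) < P x)) with hF
  have hsub : F ⊆ {⟨e, ⟨t, h2⟩⟩} := by
    rintro ⟨e', j⟩ hmem
    rw [hF, Finset.mem_filter] at hmem
    rcases hmem.2 with ⟨hte, hq⟩ | ⟨hte, hq⟩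
    · rw [tailT_eq, hxinr] at hte
      obtain ⟨rfl, hj⟩ := cV_eq_inr tail head n e' e j.val _ hte
      have hj0 : j.val = (t - 1) + 1 := hj
      have hjt : j = ⟨t, h2⟩ := Fin.ext (show j.val = t by omega)
      rw [Finset.mem_singleton, hjt]
    · rw [headT_eq, hxinr] at hte
      obtain ⟨rfl, hj⟩ := cV_eq_inr tail head n e' e (j.val + 1) _ hte
      have hj0 : j.val + 1 = (t - 1) + 1 := hj
      rw [tailT_eq] at hq
      have hj' : j.val = t - 1 := by omega
      rw [hj'] at hq
      omega
  have hcard : F.card ≤ 1 := le_trans (Finset.card_le_card hsub) (by simp)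
  have hd : inducedMD n w x = if (w.mu e).val = t then 1 else 0 := by
    rw [hx]
    exact inducedMD_cV tail head n w e t h1 h2
  have hne : (w.mu e).val ≠ t := by
    intro hval
    rw [hd, if_pos hval] at hc
    omega
  refine ⟨hne, ?_⟩
  have hd0 : inducedMD n w x = 0 := by rw [hd, if_neg hne]
  have hFpos : 0 < F.card := by
    rw [hd0] at hc
    omega
  obtain ⟨y, hy⟩ := Finset.card_pos.1 hFpos
  have hy1 := hsub hy
  rw [Finset.mem_singleton] at hy1
  subst hy1
  rw [hF, Finset.mem_filter] at hy
  rcases hy.2 with ⟨hte, hq⟩ | ⟨hte, hq⟩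
  · rw [headT_eq] at hq
    exact hq
  · exfalso
    rw [headT_eq] at hte
    exact cV_ne tail head n e t (t + 1) (le_of_lt h2) (by omega) (by omega) (hn e) (hlp e)
      hte.symm

lemma burn_step_head (hlp : Loopless tail head) (hn : ∀ e, 0 < n e) (w : AdmMD V E n) (v₀ : V)
    (P : (V ⊕ Σ e : E, Fin (n e - 1)) → ℕ)
    (hP0 : ∀ x, P x = 0 ↔ x = Sum.inl v₀)
    (hcond : ∀ x, P x ≠ 0 → inducedMD n w x < ((Finset.univ.filter fun ed : (Σ e : E, Fin (n e)) =>
      (tailT tail head n ed = x ∧ P (headT tail head n ed) < P x) ∨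
        (headT tail head n ed = x ∧ P (tailT tail head n ed) < P x)).card : ℤ))
    (e : E) (t : ℕ) (h1 : 1 ≤ t) (h2 : t < n e)
    (hlt : P (cV tail head n e t) < P (cV tail head n e (t + 1))) :
    (w.mu e).val ≠ t ∧ P (cV tail head n e (t - 1)) < P (cV tail head n e t) := by
  set x := cV tail head n e t with hx
  have hxinr : x = Sum.inr ⟨e, ⟨t - 1, by omega⟩⟩ := cV_mid tail head n e t h1 h2
  have hPx : P x ≠ 0 := by
    intro h0
    have := (hP0 x).1 h0
    rw [hxinr] at this
    exact absurd this (by simp)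
  have hc := hcond x hPx
  set F := (Finset.univ.filter fun ed : (Σ e : E, Fin (n e)) =>
      (tailT tail head n ed = x ∧ P (headT tail head n ed) < P x) ∨
        (headT tail head n ed = x ∧ P (tailT tail head n ed) < P x)) with hF
  have ht1 : t - 1 < n e := by omega
  have hsub : F ⊆ {⟨e, ⟨t - 1, ht1⟩⟩} := by
    rintro ⟨e', j⟩ hmem
    rw [hF, Finset.mem_filter] at hmem
    rcases hmem.2 with ⟨hte, hq⟩ | ⟨hte, hq⟩
    · rw [tailT_eq, hxinr] at hte
      obtain ⟨rfl, hj⟩ := cV_eq_inr tail head n e' e j.val _ hte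
      have hj0 : j.val = (t - 1) + 1 := hj
      rw [headT_eq] at hq
      have hj' : j.val = t := by omega
      rw [hj'] at hq
      omega
    · rw [headT_eq, hxinr] at hte
      obtain ⟨rfl, hj⟩ := cV_eq_inr tail head n e' e (j.val + 1) _ hte
      have hj0 : j.val + 1 = (t - 1) + 1 := hj
      have hjt : j = ⟨t - 1, ht1⟩ := Fin.ext (show j.val = t - 1 by omega)
      rw [Finset.mem_singleton, hjt]
  have hcard : F.card ≤ 1 := le_trans (Finset.card_le_card hsub) (by simp)
  have hd : inducedMD n w x = if (w.mu e).val = t then 1 else 0 := by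
    rw [hx]
    exact inducedMD_cV tail head n w e t h1 h2
  have hne : (w.mu e).val ≠ t := by
    intro hval
    rw [hd, if_pos hval] at hc
    omega
  refine ⟨hne, ?_⟩
  have hd0 : inducedMD n w x = 0 := by rw [hd, if_neg hne]
  have hFpos : 0 < F.card := by
    rw [hd0] at hc
    omega
  obtain ⟨y, hy⟩ := Finset.card_pos.1 hFpos
  have hy1 := hsub hy
  rw [Finset.mem_singleton] at hy1
  subst hy1
  rw [hF, Finset.mem_filter] at hy
  rcases hy.2 with ⟨hte, hq⟩ | ⟨hte, hq⟩
  · exfalso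
    rw [tailT_eq] at hte
    exact cV_ne tail head n e (t - 1) t (by omega) (le_of_lt h2) (by omega) (hn e) (hlp e)
      (by simpa using hte)
  · rw [tailT_eq] at hq
    have : (t : ℕ) - 1 = ((⟨t - 1, ht1⟩ : Fin (n e)) : ℕ) := rfl
    rw [← this] at hq
    exact hq

end Burn
section BurnIter

variable [Fintype V] [Fintype E] [DecidableEq V] [DecidableEq E]
variable (tail head : E → V) (n : E → ℕ)

lemma burn_tail (hlp : Loopless tail head) (hn : ∀ e, 0 < n e) (w : AdmMD V E n) (v₀ : V)
    (P : (V ⊕ Σ e : E, Fin (n e - 1)) → ℕ)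
    (hP0 : ∀ x, P x = 0 ↔ x = Sum.inl v₀)
    (hcond : ∀ x, P x ≠ 0 → inducedMD n w x < ((Finset.univ.filter fun ed : (Σ e : E, Fin (n e)) =>
      (tailT tail head n ed = x ∧ P (headT tail head n ed) < P x) ∨
        (headT tail head n ed = x ∧ P (tailT tail head n ed) < P x)).card : ℤ))
    (e : E) (h : P (cV tail head n e 1) < P (cV tail head n e 0)) :
    w.mu e = 0 ∧ P (cV tail head n e (n e)) < P (cV tail head n e 0) := by
  have aux : ∀ t, t < n e → (P (cV tail head n e (t + 1)) < P (cV tail head n e t)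
      ∧ P (cV tail head n e (t + 1)) < P (cV tail head n e 0)
      ∧ ∀ s, 1 ≤ s → s ≤ t → (w.mu e).val ≠ s) := by
    intro t
    induction t with
    | zero => exact fun _ => ⟨h, h, fun s hs1 hs2 => by omega⟩
    | succ t ih =>
      intro hlt
      obtain ⟨ih1, ih2, ih3⟩ := ih (by omega)
      have harg : P (cV tail head n e (t + 1)) < P (cV tail head n e ((t + 1) - 1)) := by
        simpa using ih1
      have hstep := burn_step_tail tail head n hlp hn w v₀ P hP0 hcond e (t + 1)
        (by omega) hlt harg
      refine ⟨hstep.2, lt_trans hstep.2 ih2, fun s hs1 hs2 => ?_⟩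
      by_cases hst : s ≤ t
      · exact ih3 s hs1 hst
      · have : s = t + 1 := by omega
        exact this ▸ hstep.1
  have hne := hn e
  obtain ⟨aux1, aux2, aux3⟩ := aux (n e - 1) (by omega)
  have heq : (n e - 1) + 1 = n e := by omega
  rw [heq] at aux2
  haveI : NeZero (n e) := ⟨by omega⟩
  have hvlt : (w.mu e).val < n e := ZMod.val_lt _
  have hmu0 : (w.mu e).val = 0 := by
    by_contra hmune
    exact aux3 _ (by omega) (by omega) rfl
  exact ⟨(ZMod.val_eq_zero _).1 hmu0, aux2⟩

lemma burn_head (hlp : Loopless tail head) (hn : ∀ e, 0 < n e) (w : AdmMD V E n) (v₀ : V)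
    (P : (V ⊕ Σ e : E, Fin (n e - 1)) → ℕ)
    (hP0 : ∀ x, P x = 0 ↔ x = Sum.inl v₀)
    (hcond : ∀ x, P x ≠ 0 → inducedMD n w x < ((Finset.univ.filter fun ed : (Σ e : E, Fin (n e)) =>
      (tailT tail head n ed = x ∧ P (headT tail head n ed) < P x) ∨
        (headT tail head n ed = x ∧ P (tailT tail head n ed) < P x)).card : ℤ))
    (e : E) (h : P (cV tail head n e (n e - 1)) < P (cV tail head n e (n e))) :
    w.mu e = 0 ∧ P (cV tail head n e 0) < P (cV tail head n e (n e)) := by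
  have aux : ∀ t, t < n e →
      (P (cV tail head n e (n e - 1 - t)) < P (cV tail head n e (n e - t))
      ∧ P (cV tail head n e (n e - 1 - t)) < P (cV tail head n e (n e))
      ∧ ∀ s, n e - t ≤ s → s ≤ n e - 1 → (w.mu e).val ≠ s) := by
    intro t
    induction t with
    | zero =>
      intro _
      refine ⟨by simpa using h, by simpa using h, fun s hs1 hs2 => by omega⟩
    | succ t ih =>
      intro hlt
      obtain ⟨ih1, ih2, ih3⟩ := ih (by omega)
      have h1' : 1 ≤ n e - 1 - t := by omega
      have h2' : n e - 1 - t < n e := by omega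
      have harg : P (cV tail head n e (n e - 1 - t))
          < P (cV tail head n e ((n e - 1 - t) + 1)) := by
        have heq : (n e - 1 - t) + 1 = n e - t := by omega
        rw [heq]
        exact ih1
      have hstep := burn_step_head tail head n hlp hn w v₀ P hP0 hcond e (n e - 1 - t)
        h1' h2' harg
      have e1 : (n e - 1 - t) - 1 = n e - 1 - (t + 1) := by omega
      have e2 : n e - 1 - t = n e - (t + 1) := by omega
      refine ⟨?_, ?_, ?_⟩
      · rw [← e1, ← e2]
        exact hstep.2
      · rw [← e1]
        exact lt_trans hstep.2 ih2
      · intro s hs1 hs2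
        by_cases hc' : n e - t ≤ s
        · exact ih3 s hc' hs2
        · have : s = n e - 1 - t := by omega
          exact this ▸ hstep.1
  have hne := hn e
  obtain ⟨aux1, aux2, aux3⟩ := aux (n e - 1) (by omega)
  have e3 : n e - 1 - (n e - 1) = 0 := by omega
  rw [e3] at aux2
  haveI : NeZero (n e) := ⟨by omega⟩
  have hvlt : (w.mu e).val < n e := ZMod.val_lt _
  have hmu0 : (w.mu e).val = 0 := by
    by_contra hmune
    exact aux3 _ (by omega) (by omega) rfl
  exact ⟨(ZMod.val_eq_zero _).1 hmu0, aux2⟩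

end BurnIter

/-- an admissible multidegree is concentrated at `v₀` iff its induced
multidegree on the subdivided graph `Γ̃` is concentrated at `v₀`. -/
theorem statement_2 {V E : Type*} [Fintype V] [Fintype E] [DecidableEq V] [DecidableEq E]
    (tail head : E → V) (n : E → ℕ)
    (hloop : Loopless tail head) (hconn : MGConnected tail head)
    (hn : ∀ e, 0 < n e)
    (w : AdmMD V E n) (v₀ : V) :
    Concentrated tail head n w v₀ ↔
      ConcentratedDiv (tailT tail head n) (headT tail head n) (inducedMD n w)
        (Sum.inl v₀) := by
  constructor
  · intro hc
    obtain ⟨pos, hposinj, hpos0, hposcond⟩ := conc_to_pos tail head n hloop w v₀ hc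
    set M := (∑ e : E, n e) + 1 with hMdef
    have hMn : ∀ e, n e < M := by
      intro e
      have h1 : n e ≤ ∑ e : E, n e :=
        Finset.single_le_sum (fun i _ => Nat.zero_le (n i)) (Finset.mem_univ e)
      omega
    have hM0 : 0 < M := by omega
    have hmul : ∀ a b r : ℕ, a < b → r < M → M * a + r < M * b := by
      intro a b r hab hr
      have h1 : M * (a + 1) ≤ M * b := Nat.mul_le_mul_left M hab
      have h2 : M * (a + 1) = M * a + M := by ring
      omega
    have hptph : ∀ e, pos (tail e) ≠ pos (head e) := fun e hh => hloop e (hposinj hh)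
    set T : E → ℕ := fun e => if pos (tail e) < pos (head e)
        then (if (w.mu e).val = 0 then n e else (w.mu e).val)
        else (if (w.mu e).val = 0 then 1 else (w.mu e).val + 1) with hTdef
    set P : (V ⊕ Σ e : E, Fin (n e - 1)) → ℕ := fun x => match x with
      | Sum.inl u => M * pos u
      | Sum.inr p => if p.2.val + 1 < T p.1 then M * pos (tail p.1) + (p.2.val + 1)
          else M * pos (head p.1) + (n p.1 - (p.2.val + 1)) with hPdef
    have hPinl : ∀ u, P (Sum.inl u) = M * pos u := by
      intro u; rw [hPdef]
    have hPinr : ∀ (e : E) (i : Fin (n e - 1)), P (Sum.inr ⟨e, i⟩)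
        = if i.val + 1 < T e then M * pos (tail e) + (i.val + 1)
          else M * pos (head e) + (n e - (i.val + 1)) := by
      intro e i; rw [hPdef]
    have hPcV : ∀ (e : E) (t : ℕ), 1 ≤ t → t < n e → P (cV tail head n e t)
        = if t < T e then M * pos (tail e) + t else M * pos (head e) + (n e - t) := by
      intro e t h1 h2
      rw [cV_mid tail head n e t h1 h2, hPinr]
      have h3 : ((⟨t - 1, by omega⟩ : Fin (n e - 1)).val) + 1 = t := by
        show t - 1 + 1 = t
        omega
      rw [h3]
    have hPzero : ∀ e, P (cV tail head n e 0) = M * pos (tail e) := by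
      intro e; rw [cV_zero, hPinl]
    have hPlast : ∀ e, P (cV tail head n e (n e)) = M * pos (head e) := by
      intro e; rw [cV_last tail head n e (n e) le_rfl (hn e), hPinl]
    refine pos_to_concDiv (tailT tail head n) (headT tail head n)
      (looplessT tail head n hloop hn) (inducedMD n w) (Sum.inl v₀) P ?_ ?_
    · -- the zero iff condition
      intro x
      obtain u | ⟨e, i⟩ := x
      · rw [hPinl]
        constructor
        · intro hh
          have h0 : pos u = 0 := by
            rcases Nat.mul_eq_zero.1 hh with h | h
            · omega
            · exact h
          rw [(hpos0 u).1 h0]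
        · intro hh
          injection hh with hh'
          rw [(hpos0 u).2 hh', mul_zero]
      · apply iff_of_false
        · rw [hPinr]
          have := i.isLt
          split_ifs <;> intro hh <;> simp only [Nat.add_eq_zero_iff] at hh <;> omega
        · simp
    · -- the main inequality condition
      intro x hPx
      obtain u | ⟨e, i⟩ := x
      · -- old vertex
        have hup : pos u ≠ 0 := by
          intro h0
          exact hPx (by rw [hPinl, h0, mul_zero])
        have hwv := hposcond u hup
        have hind : inducedMD n w (Sum.inl u) = w.wV u := rfl
        rw [hind]
        refine lt_of_lt_of_le hwv ?_
        have hcard : (Finset.univ.filter fun e =>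
              ((tail e = u ∧ pos (head e) < pos u) ∨ (head e = u ∧ pos (tail e) < pos u)) ∧
                w.mu e = 0).card
            ≤ (Finset.univ.filter fun ed : (Σ e : E, Fin (n e)) =>
              (tailT tail head n ed = Sum.inl u ∧
                P (headT tail head n ed) < P (Sum.inl u)) ∨
              (headT tail head n ed = Sum.inl u ∧
                P (tailT tail head n ed) < P (Sum.inl u))).card := by
          have hlt1 : ∀ e, n e - 1 < n e := fun e => by have := hn e; omega
          refine Finset.card_le_card_of_injOn
            (fun e => if h : tail e = u then ⟨e, ⟨0, hn e⟩⟩ else ⟨e, ⟨n e - 1, hlt1 e⟩⟩) ?_ ?_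
          · intro e he
            beta_reduce
            rw [Finset.mem_coe, Finset.mem_filter] at he ⊢
            refine ⟨Finset.mem_univ _, ?_⟩
            obtain ⟨hor, hmu⟩ := he.2
            haveI : NeZero (n e) := ⟨by have := hn e; omega⟩
            have hm0 : (w.mu e).val = 0 := by rw [hmu, ZMod.val_zero]
            rcases hor with ⟨htu, hlt⟩ | ⟨hhu, hlt⟩
            · rw [dif_pos htu]
              left
              constructor
              · rw [tailT_eq]
                show cV tail head n e 0 = Sum.inl u
                rw [cV_zero, htu]
              · rw [headT_eq]
                show P (cV tail head n e (0 + 1)) < P (Sum.inl u)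
                rw [hPinl]
                by_cases hne1 : n e = 1
                · rw [show (0 : ℕ) + 1 = n e by omega, hPlast]
                  have := hmul (pos (head e)) (pos u) 0 hlt hM0
                  omega
                · rw [show (0 : ℕ) + 1 = 1 from rfl,
                    hPcV e 1 le_rfl (by have := hn e; omega)]
                  have hTe : T e = 1 := by
                    simp only [hTdef]
                    rw [if_neg (by rw [htu]; omega), if_pos hm0]
                  rw [if_neg (by omega)]
                  have := hmul (pos (head e)) (pos u) (n e - 1) hlt (by have := hMn e; omega)
                  omega
            · have htne : tail e ≠ u := fun hcontra => hloop e (hcontra.trans hhu.symm)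
              rw [dif_neg htne]
              right
              constructor
              · rw [headT_eq]
                show cV tail head n e ((n e - 1) + 1) = Sum.inl u
                rw [show (n e - 1) + 1 = n e by have := hn e; omega,
                  cV_last tail head n e (n e) le_rfl (hn e), hhu]
              · rw [tailT_eq]
                show P (cV tail head n e (n e - 1)) < P (Sum.inl u)
                rw [hPinl]
                by_cases hne1 : n e = 1
                · rw [show n e - 1 = 0 by omega, hPzero]
                  have := hmul (pos (tail e)) (pos u) 0 hlt hM0
                  omega
                · rw [hPcV e (n e - 1) (by have := hn e; omega) (hlt1 e)]
                  have hTe : T e = n e := by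
                    simp only [hTdef]
                    rw [if_pos (by rw [hhu]; omega), if_pos hm0]
                  rw [if_pos (by have := hn e; omega)]
                  have := hmul (pos (tail e)) (pos u) (n e - 1) hlt (by have := hMn e; omega)
                  omega
          · intro a ha b hb hab
            beta_reduce at hab
            have hfst : ∀ e : E, ((if h : tail e = u then (⟨e, ⟨0, hn e⟩⟩ : Σ e : E, Fin (n e))
                else ⟨e, ⟨n e - 1, hlt1 e⟩⟩).1) = e := by
              intro e
              by_cases h : tail e = u
              · rw [dif_pos h]
              · rw [dif_neg h]
            have : a = ((if h : tail a = u then (⟨a, ⟨0, hn a⟩⟩ : Σ e : E, Fin (n e))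
                else ⟨a, ⟨n a - 1, hlt1 a⟩⟩).1) := (hfst a).symm
            rw [this, hab, hfst b]
        exact_mod_cast hcard
      · -- new vertex
        set t := i.val + 1 with htdef
        have hti : i.val < n e - 1 := i.isLt
        have ht1 : 1 ≤ t := by omega
        have ht2 : t < n e := by omega
        have hxcv : (Sum.inr ⟨e, i⟩ : V ⊕ Σ e : E, Fin (n e - 1)) = cV tail head n e t := by
          rw [cV_mid tail head n e t ht1 ht2]
          have : i = ⟨t - 1, by omega⟩ := Fin.ext (by show i.val = t - 1; omega)
          rw [this]
        haveI : NeZero (n e) := ⟨by have := hn e; omega⟩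
        have hmlt : (w.mu e).val < n e := ZMod.val_lt (w.mu e)
        have hind : inducedMD n w (Sum.inr ⟨e, i⟩)
            = if (w.mu e).val = t then 1 else 0 := rfl
        set F := (Finset.univ.filter fun ed : (Σ e : E, Fin (n e)) =>
          (tailT tail head n ed = Sum.inr ⟨e, i⟩ ∧
            P (headT tail head n ed) < P (Sum.inr ⟨e, i⟩)) ∨
          (headT tail head n ed = Sum.inr ⟨e, i⟩ ∧
            P (tailT tail head n ed) < P (Sum.inr ⟨e, i⟩))) with hFdef
        have hPx' : P (Sum.inr ⟨e, i⟩) = if t < T e then M * pos (tail e) + t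
            else M * pos (head e) + (n e - t) := by
          rw [hxcv, hPcV e t ht1 ht2]
        have hprevmem : P (cV tail head n e (t - 1)) < P (Sum.inr ⟨e, i⟩) →
            (⟨e, ⟨t - 1, by omega⟩⟩ : Σ e : E, Fin (n e)) ∈ F := by
          intro hq
          rw [hFdef, Finset.mem_filter]
          refine ⟨Finset.mem_univ _, Or.inr ⟨?_, ?_⟩⟩
          · rw [headT_eq]
            show cV tail head n e ((t - 1) + 1) = Sum.inr ⟨e, i⟩
            rw [show t - 1 + 1 = t by omega, ← hxcv]
          · rw [tailT_eq]
            exact hq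
        have hnxtmem : P (cV tail head n e (t + 1)) < P (Sum.inr ⟨e, i⟩) →
            (⟨e, ⟨t, ht2⟩⟩ : Σ e : E, Fin (n e)) ∈ F := by
          intro hq
          rw [hFdef, Finset.mem_filter]
          refine ⟨Finset.mem_univ _, Or.inl ⟨?_, ?_⟩⟩
          · rw [tailT_eq]
            exact hxcv.symm
          · rw [headT_eq]
            exact hq
        have claim1 : t < T e → P (cV tail head n e (t - 1)) < P (Sum.inr ⟨e, i⟩) := by
          intro hb
          rw [hPx', if_pos hb]
          by_cases h1 : t = 1
          · rw [h1]
            show P (cV tail head n e 0) < M * pos (tail e) + 1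
            rw [hPzero]
            omega
          · rw [hPcV e (t - 1) (by omega) (by omega), if_pos (by omega : t - 1 < T e)]
            omega
        have claim2 : ¬(t < T e) → P (cV tail head n e (t + 1)) < P (Sum.inr ⟨e, i⟩) := by
          intro hb
          rw [hPx', if_neg hb]
          by_cases h1 : t + 1 = n e
          · rw [h1, hPlast]
            omega
          · rw [hPcV e (t + 1) (by omega) (by omega), if_neg (by omega : ¬(t + 1 < T e))]
            omega
        have claim3 : (w.mu e).val = t → t < T e →
            P (cV tail head n e (t + 1)) < P (Sum.inr ⟨e, i⟩) := by
          intro hmt hb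
          rw [hPx', if_pos hb]
          have hcnd : ¬ (pos (tail e) < pos (head e)) := by
            intro hcontra
            have hTm : T e = (w.mu e).val := by
              simp only [hTdef]
              rw [if_pos hcontra, if_neg (by omega)]
            omega
          have hTt : T e = (w.mu e).val + 1 := by
            simp only [hTdef]
            rw [if_neg hcnd, if_neg (by omega)]
          have hplt : pos (head e) < pos (tail e) := by have := hptph e; omega
          by_cases h1 : t + 1 = n e
          · rw [h1, hPlast]
            have := hmul (pos (head e)) (pos (tail e)) 0 hplt hM0
            omega
          · rw [hPcV e (t + 1) (by omega) (by omega), if_neg (by omega)]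
            have := hmul (pos (head e)) (pos (tail e)) (n e - (t + 1)) hplt
              (by have := hMn e; omega)
            omega
        have claim4 : (w.mu e).val = t → ¬(t < T e) →
            P (cV tail head n e (t - 1)) < P (Sum.inr ⟨e, i⟩) := by
          intro hmt hb
          rw [hPx', if_neg hb]
          have hcnd : pos (tail e) < pos (head e) := by
            by_contra hcontra
            have hTt : T e = (w.mu e).val + 1 := by
              simp only [hTdef]
              rw [if_neg hcontra, if_neg (by omega)]
            omega
          by_cases h1 : t = 1
          · rw [h1]
            show P (cV tail head n e 0) < M * pos (head e) + (n e - 1)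
            rw [hPzero]
            have := hmul (pos (tail e)) (pos (head e)) 0 hcnd hM0
            omega
          · have hTm : T e = (w.mu e).val := by
              simp only [hTdef]
              rw [if_pos hcnd, if_neg (by omega)]
            rw [hPcV e (t - 1) (by omega) (by omega), if_pos (by omega)]
            have := hmul (pos (tail e)) (pos (head e)) (t - 1) hcnd (by have := hMn e; omega)
            omega
        rw [hind]
        by_cases hmt : (w.mu e).val = t
        · rw [if_pos hmt]
          have hprev : P (cV tail head n e (t - 1)) < P (Sum.inr ⟨e, i⟩) := by
            by_cases hb : t < T e
            · exact claim1 hb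
            · exact claim4 hmt hb
          have hnxt : P (cV tail head n e (t + 1)) < P (Sum.inr ⟨e, i⟩) := by
            by_cases hb : t < T e
            · exact claim3 hmt hb
            · exact claim2 hb
          have hmem1 := hprevmem hprev
          have hmem2 := hnxtmem hnxt
          have hne12 : (⟨e, ⟨t - 1, by omega⟩⟩ : Σ e : E, Fin (n e)) ≠ ⟨e, ⟨t, ht2⟩⟩ := by
            intro hcontra
            rw [Sigma.mk.inj_iff] at hcontra
            have h5 : (⟨t - 1, by omega⟩ : Fin (n e)) = ⟨t, ht2⟩ := eq_of_heq hcontra.2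
            rw [Fin.mk.injEq] at h5
            omega
          have hsub : ({⟨e, ⟨t - 1, by omega⟩⟩, ⟨e, ⟨t, ht2⟩⟩} :
              Finset (Σ e : E, Fin (n e))) ⊆ F := by
            intro y hy
            rcases Finset.mem_insert.1 hy with hy1 | hy2
            · rw [hy1]; exact hmem1
            · rw [Finset.mem_singleton.1 hy2]; exact hmem2
          have hcard2 : 2 ≤ F.card := by
            have := Finset.card_le_card hsub
            rw [Finset.card_pair hne12] at this
            exact this
          omega
        · rw [if_neg hmt]
          have hpos : 0 < F.card := by
            apply Finset.card_pos.2
            by_cases hb : t < T e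
            · exact ⟨_, hprevmem (claim1 hb)⟩
            · exact ⟨_, hnxtmem (claim2 hb)⟩
          omega
  · intro hc
    obtain ⟨P, hPinj, hP0, hPcond⟩ := concDiv_to_pos (tailT tail head n) (headT tail head n)
      (looplessT tail head n hloop hn) (inducedMD n w) (Sum.inl v₀) hc
    refine pos_to_conc tail head n hloop w v₀ (fun u => P (Sum.inl u)) ?_ ?_
    · intro x
      refine (hP0 (Sum.inl x)).trans ⟨fun hh => by injection hh, fun hh => by rw [hh]⟩
    · intro u hu
      have hcnd := hPcond (Sum.inl u) hu
      show w.wV u < ((Finset.univ.filter fun e =>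
        ((tail e = u ∧ P (Sum.inl (head e)) < P (Sum.inl u)) ∨
          (head e = u ∧ P (Sum.inl (tail e)) < P (Sum.inl u))) ∧ w.mu e = 0).card : ℤ)
      have hind : inducedMD n w (Sum.inl u) = w.wV u := rfl
      rw [hind] at hcnd
      refine lt_of_lt_of_le hcnd ?_
      have hcard : (Finset.univ.filter fun ed : (Σ e : E, Fin (n e)) =>
            (tailT tail head n ed = Sum.inl u ∧
              P (headT tail head n ed) < P (Sum.inl u)) ∨
            (headT tail head n ed = Sum.inl u ∧
              P (tailT tail head n ed) < P (Sum.inl u))).card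
          ≤ (Finset.univ.filter fun e =>
            ((tail e = u ∧ P (Sum.inl (head e)) < P (Sum.inl u)) ∨
              (head e = u ∧ P (Sum.inl (tail e)) < P (Sum.inl u))) ∧ w.mu e = 0).card := by
        have key : ∀ (e : E) (j : Fin (n e)),
            ((tailT tail head n ⟨e, j⟩ = Sum.inl u ∧
              P (headT tail head n ⟨e, j⟩) < P (Sum.inl u)) ∨
            (headT tail head n ⟨e, j⟩ = Sum.inl u ∧
              P (tailT tail head n ⟨e, j⟩) < P (Sum.inl u))) →
            ((j.val = 0 ∧ tail e = u) ∨ (j.val = n e - 1 ∧ head e = u)) ∧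
              (((tail e = u ∧ P (Sum.inl (head e)) < P (Sum.inl u)) ∨
                (head e = u ∧ P (Sum.inl (tail e)) < P (Sum.inl u))) ∧ w.mu e = 0) := by
          intro e j hj
          rcases hj with ⟨hte, hq⟩ | ⟨hte, hq⟩
          · rw [tailT_eq] at hte
            rcases cV_eq_inl tail head n e j.val u (hn e) hte with ⟨hj0, htu⟩ | ⟨hjn, hhu⟩
            · -- burn from tail
              rw [headT_eq, hj0] at hq
              have hb : P (cV tail head n e 1) < P (cV tail head n e 0) := by
                rw [cV_zero, htu]
                exact hq
              obtain ⟨hmu, hplt⟩ := burn_tail tail head n hloop hn w v₀ P hP0 hPcond e hb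
              rw [cV_last tail head n e (n e) le_rfl (hn e), cV_zero, htu] at hplt
              exact ⟨Or.inl ⟨hj0, htu⟩, Or.inl ⟨htu, hplt⟩, hmu⟩
            · exact absurd hjn (by have := j.isLt; omega)
          · rw [headT_eq] at hte
            rcases cV_eq_inl tail head n e (j.val + 1) u (hn e) hte with ⟨hj0, htu⟩ | ⟨hjn, hhu⟩
            · exact absurd hj0 (by omega)
            · have hjval : j.val = n e - 1 := by have := j.isLt; omega
              rw [tailT_eq, hjval] at hq
              have hb : P (cV tail head n e (n e - 1)) < P (cV tail head n e (n e)) := by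
                rw [cV_last tail head n e (n e) le_rfl (hn e), hhu]
                exact hq
              obtain ⟨hmu, hplt⟩ := burn_head tail head n hloop hn w v₀ P hP0 hPcond e hb
              rw [cV_last tail head n e (n e) le_rfl (hn e), cV_zero, hhu] at hplt
              exact ⟨Or.inr ⟨hjval, hhu⟩, Or.inr ⟨hhu, hplt⟩, hmu⟩
        refine Finset.card_le_card_of_injOn (fun ed => ed.1) ?_ ?_
        · rintro ⟨e, j⟩ hmem
          rw [Finset.mem_coe, Finset.mem_filter] at hmem ⊢
          exact ⟨Finset.mem_univ _, (key e j hmem.2).2⟩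
        · rintro ⟨e, j⟩ hmem ⟨e', j'⟩ hmem' hfst
          simp only [Finset.coe_filter, Set.mem_setOf_eq] at hmem hmem'
          have he : e = e' := hfst
          subst he
          obtain ⟨hj, -⟩ := key e j hmem.2
          obtain ⟨hj', -⟩ := key e j' hmem'.2
          have : j.val = j'.val := by
            rcases hj with ⟨h1, h2⟩ | ⟨h1, h2⟩ <;> rcases hj' with ⟨h1', h2'⟩ | ⟨h1', h2'⟩
            · omega
            · exact absurd (h2.trans h2'.symm) (hloop e)
            · exact absurd (h2'.trans h2.symm) (hloop e)
            · omega
          rw [Sigma.mk.inj_iff]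
          exact ⟨rfl, heq_of_eq (Fin.ext this)⟩
      exact_mod_cast hcard

end LLS
end

section
/- An admissible multidegree (w, μ) on (Γ, 𝐧) is concentrated at a vertex v₀ ∈ V(Γ) if and only if the induced multidegree w̃ on the subdivided graph Γ̃ satisfies: for every nonempty subset S ⊆ V(Γ̃)∖{v₀} there is some u ∈ S such that w̃(u) is strictly smaller than the number of edges of Γ̃ from u to V(Γ̃)∖S. -/
open scoped Classical

namespace LLS

variable {V E : Type*}

section Proof

variable {V E : Type*} [Fintype V] [Fintype E] [DecidableEq V] [DecidableEq E]
variable (tail head : E → V) (n : E → ℕ)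

/-- Intermediate static condition on `Γ`. -/
def Cond (w : AdmMD V E n) (v₀ : V) : Prop :=
  ∃ l : List V, l.Nodup ∧ (∀ x : V, x ∈ l) ∧ l.head? = some v₀ ∧
    ∀ (i : ℕ) (h : i < l.length), 0 < i →
      w.wV (l.get ⟨i, h⟩) < ((Finset.univ.filter fun e : E => w.mu e = 0 ∧
        ((tail e = l.get ⟨i, h⟩ ∧ head e ∈ l.take i) ∨
         (head e = l.get ⟨i, h⟩ ∧ tail e ∈ l.take i))).card : ℤ)

lemma sigma_eq_zero_of {e : E} {v : V} (h1 : tail e ≠ v) (h2 : head e ≠ v) :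
    sigma tail head e v = 0 := by simp [sigma, h1, h2]

lemma negTwist_mu (w : AdmMD V E n) (v : V) (e : E) :
    (negTwist tail head n w v).mu e = w.mu e - ((sigma tail head e v : ℤ) : ZMod (n e)) := rfl

lemma foldl_wV (hloop : Loopless tail head) :
    ∀ (l : List V), l.Nodup → ∀ (u : V), u ∉ l → ∀ (w : AdmMD V E n),
      (l.foldl (negTwist tail head n) w).wV u = w.wV u -
        ((Finset.univ.filter fun e : E => w.mu e = 0 ∧
          ((tail e = u ∧ head e ∈ l) ∨ (head e = u ∧ tail e ∈ l))).card : ℤ) := by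
  intro l
  induction l with
  | nil => intro _ u _ w; simp
  | cons a l ih =>
    intro hnd u hu w
    have hua : u ≠ a := fun h => hu (h ▸ List.mem_cons_self)
    have hul : u ∉ l := fun h => hu (List.mem_cons_of_mem a h)
    have hal : a ∉ l := (List.nodup_cons.mp hnd).1
    have hl : l.Nodup := (List.nodup_cons.mp hnd).2
    rw [List.foldl_cons, ih hl u hul (negTwist tail head n w a)]
    have hA : (Finset.univ.filter fun e : E => (negTwist tail head n w a).mu e = 0 ∧
          ((tail e = u ∧ head e ∈ l) ∨ (head e = u ∧ tail e ∈ l)))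
        = (Finset.univ.filter fun e : E => w.mu e = 0 ∧
          ((tail e = u ∧ head e ∈ l) ∨ (head e = u ∧ tail e ∈ l))) := by
      apply Finset.filter_congr
      intro e _
      by_cases hb : (tail e = u ∧ head e ∈ l) ∨ (head e = u ∧ tail e ∈ l)
      · have h1 : tail e ≠ a := by
          rcases hb with ⟨h, h'⟩ | ⟨h, h'⟩
          · exact h ▸ hua
          · exact fun hh => hal (hh ▸ h')
        have h2 : head e ≠ a := by
          rcases hb with ⟨h, h'⟩ | ⟨h, h'⟩
          · exact fun hh => hal (hh ▸ h')
          · exact h ▸ hua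
        rw [negTwist_mu, sigma_eq_zero_of tail head h1 h2]
        push_cast
        simp [hb]
      · simp [hb]
    rw [hA]
    have hB : (Finset.univ.filter fun e : E => sigma tail head e a ≠ 0 ∧ w.mu e = 0 ∧
          otherEnd tail head e a = u)
        = (Finset.univ.filter fun e : E => w.mu e = 0 ∧
          ((tail e = u ∧ head e = a) ∨ (head e = u ∧ tail e = a))) := by
      apply Finset.filter_congr
      intro e _
      by_cases h1 : tail e = a <;> by_cases h2 : head e = a
      · exact absurd (h1.trans h2.symm) (hloop e)
      · simp [sigma, otherEnd, h1, h2, Ne.symm hua] <;> tauto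
      · simp [sigma, otherEnd, h1, h2, Ne.symm hua] <;> tauto
      · simp [sigma, otherEnd, h1, h2]
    have hunion : (Finset.univ.filter fun e : E => w.mu e = 0 ∧
          ((tail e = u ∧ head e ∈ a :: l) ∨ (head e = u ∧ tail e ∈ a :: l)))
        = (Finset.univ.filter fun e : E => w.mu e = 0 ∧
            ((tail e = u ∧ head e = a) ∨ (head e = u ∧ tail e = a)))
          ∪ (Finset.univ.filter fun e : E => w.mu e = 0 ∧
            ((tail e = u ∧ head e ∈ l) ∨ (head e = u ∧ tail e ∈ l))) := by
      ext e
      simp only [Finset.mem_filter, Finset.mem_union, List.mem_cons]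
      tauto
    have hdisj : Disjoint
        (Finset.univ.filter fun e : E => w.mu e = 0 ∧
            ((tail e = u ∧ head e = a) ∨ (head e = u ∧ tail e = a)))
        (Finset.univ.filter fun e : E => w.mu e = 0 ∧
            ((tail e = u ∧ head e ∈ l) ∨ (head e = u ∧ tail e ∈ l))) := by
      rw [Finset.disjoint_left]
      intro e he1 he2
      simp only [Finset.mem_filter] at he1 he2
      rcases he1.2.2 with ⟨h1, h2⟩ | ⟨h1, h2⟩ <;> rcases he2.2.2 with ⟨h3, h4⟩ | ⟨h3, h4⟩
      · exact hal (h2 ▸ h4)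
      · exact hua (h3 ▸ h2 ▸ rfl)
      · exact hua (h3.symm ▸ h2 ▸ rfl)
      · exact hal (h2 ▸ h4)
    show (negTwist tail head n w a).wV u - _ = _
    simp only [negTwist, if_neg hua]
    rw [hB, hunion, Finset.card_union_of_disjoint hdisj]
    push_cast
    ring

lemma not_mem_take {l : List V} (h : l.Nodup) {i : ℕ} (hi : i < l.length) :
    l.get ⟨i, hi⟩ ∉ l.take i := by
  simp only [List.get_eq_getElem]
  intro hm
  rw [List.mem_take_iff_getElem] at hm
  obtain ⟨j, hj, hje⟩ := hm
  rw [List.Nodup.getElem_inj_iff h] at hje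
  omega

lemma concentrated_iff_cond (hloop : Loopless tail head) (w : AdmMD V E n) (v₀ : V) :
    Concentrated tail head n w v₀ ↔ Cond tail head n w v₀ := by
  unfold Concentrated Cond
  apply exists_congr
  intro l
  have key : l.Nodup → ∀ (i : ℕ) (h : i < l.length),
      ((l.take i).foldl (negTwist tail head n) w).wV (l.get ⟨i, h⟩)
        = w.wV (l.get ⟨i, h⟩) -
          ((Finset.univ.filter fun e : E => w.mu e = 0 ∧
            ((tail e = l.get ⟨i, h⟩ ∧ head e ∈ l.take i) ∨
             (head e = l.get ⟨i, h⟩ ∧ tail e ∈ l.take i))).card : ℤ) := by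
    intro hnd i h
    exact foldl_wV tail head n hloop (l.take i) (hnd.sublist (List.take_sublist i l))
      (l.get ⟨i, h⟩) (not_mem_take hnd h) w
  constructor
  · rintro ⟨h1, h2, h3, h4⟩
    refine ⟨h1, h2, h3, fun i h hi => ?_⟩
    have := h4 i h hi
    rw [key h1 i h] at this
    linarith
  · rintro ⟨h1, h2, h3, h4⟩
    refine ⟨h1, h2, h3, fun i h hi => ?_⟩
    rw [key h1 i h]
    have := h4 i h hi
    linarith

end Proof
section Proof2

variable {V E : Type*} [Fintype V] [Fintype E] [DecidableEq V] [DecidableEq E]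
variable (tail head : E → V) (n : E → ℕ)

/-- The filter of edges of the subdivided graph from `u` to the complement of `S`. -/
noncomputable def rhsFilter (S : Finset (V ⊕ Σ e : E, Fin (n e - 1)))
    (u : V ⊕ Σ e : E, Fin (n e - 1)) : Finset (Σ e : E, Fin (n e)) :=
  Finset.univ.filter fun ε : Σ e : E, Fin (n e) =>
    (tailT tail head n ε = u ∧ headT tail head n ε ∉ S) ∨
    (headT tail head n ε = u ∧ tailT tail head n ε ∉ S)

lemma tailT_val_zero {e : E} {j : Fin (n e)} (h : j.val = 0) :
    tailT tail head n ⟨e, j⟩ = Sum.inl (tail e) := dif_pos h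

lemma tailT_val_pos {e : E} {j : Fin (n e)} (h : ¬ j.val = 0) (h2 : j.val - 1 < n e - 1) :
    tailT tail head n ⟨e, j⟩ = Sum.inr ⟨e, ⟨j.val - 1, h2⟩⟩ := dif_neg h

lemma headT_val_last {e : E} {j : Fin (n e)} (h : j.val = n e - 1) :
    headT tail head n ⟨e, j⟩ = Sum.inl (head e) := dif_pos h

lemma headT_val_ne {e : E} {j : Fin (n e)} (h : ¬ j.val = n e - 1) (h2 : j.val < n e - 1) :
    headT tail head n ⟨e, j⟩ = Sum.inr ⟨e, ⟨j.val, h2⟩⟩ := dif_neg h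

lemma fin_lt1 {e : E} (i : Fin (n e - 1)) : i.val < n e := by have := i.isLt; omega

lemma fin_lt2 {e : E} (i : Fin (n e - 1)) : i.val + 1 < n e := by have := i.isLt; omega

lemma headT_eps1 {e : E} (i : Fin (n e - 1)) :
    headT tail head n ⟨e, ⟨i.val, fin_lt1 n i⟩⟩ = Sum.inr ⟨e, i⟩ := by
  have hne : ¬ (i.val = n e - 1) := by have := i.isLt; omega
  exact headT_val_ne tail head n hne i.isLt

lemma tailT_eps2 {e : E} (i : Fin (n e - 1)) :
    tailT tail head n ⟨e, ⟨i.val + 1, fin_lt2 n i⟩⟩ = Sum.inr ⟨e, i⟩ := by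
  have hne : ¬ (i.val + 1 = 0) := by omega
  exact tailT_val_pos tail head n hne
    (show i.val + 1 - 1 < n e - 1 from by have := i.isLt; omega)

/-- Any subdivided edge incident to the new vertex `(e, i)` is `(e, i)` or `(e, i+1)`. -/
lemma incident_mem {e : E} {i : Fin (n e - 1)} {ε : Σ e' : E, Fin (n e')}
    (h : tailT tail head n ε = Sum.inr ⟨e, i⟩ ∨ headT tail head n ε = Sum.inr ⟨e, i⟩) :
    ε = ⟨e, ⟨i.val, fin_lt1 n i⟩⟩ ∨ ε = ⟨e, ⟨i.val + 1, fin_lt2 n i⟩⟩ := by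
  obtain ⟨e', j⟩ := ε
  rcases h with h | h
  · by_cases h0 : j.val = 0
    · rw [tailT_val_zero tail head n h0] at h; exact absurd h (by simp)
    · rw [tailT_val_pos tail head n h0 (by have := j.isLt; omega)] at h
      right
      have h' := Sum.inr.inj h
      rw [Sigma.mk.inj_iff] at h'
      obtain ⟨he, hh⟩ := h'
      subst he
      have := congrArg Fin.val (eq_of_heq hh)
      simp only at this
      refine congrArg (Sigma.mk e') (Fin.ext ?_)
      simp only
      omega
  · by_cases h0 : j.val = n e' - 1
    · rw [headT_val_last tail head n h0] at h; exact absurd h (by simp)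
    · rw [headT_val_ne tail head n h0 (by have := j.isLt; omega)] at h
      left
      have h' := Sum.inr.inj h
      rw [Sigma.mk.inj_iff] at h'
      obtain ⟨he, hh⟩ := h'
      subst he
      have := congrArg Fin.val (eq_of_heq hh)
      simp only at this
      exact congrArg (Sigma.mk e') (Fin.ext (by simp only; omega))

variable {w : AdmMD V E n} {S : Finset (V ⊕ Σ e : E, Fin (n e - 1))}

lemma step_left (hBad : ∀ u ∈ S, ((rhsFilter tail head n S u).card : ℤ) ≤ inducedMD n w u)
    {e : E} {i : Fin (n e - 1)} (hchip : (w.mu e).val ≠ i.val + 1)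
    (hS : Sum.inr ⟨e, i⟩ ∈ S) :
    tailT tail head n ⟨e, ⟨i.val, fin_lt1 n i⟩⟩ ∈ S := by
  have h0 : inducedMD n w (Sum.inr ⟨e, i⟩) = 0 := by simp [inducedMD, hchip]
  have hcard := hBad _ hS
  rw [h0] at hcard
  by_contra htail
  have hmem : (⟨e, ⟨i.val, fin_lt1 n i⟩⟩ : Σ e' : E, Fin (n e')) ∈ rhsFilter tail head n S (Sum.inr ⟨e, i⟩) := by
    rw [rhsFilter, Finset.mem_filter]
    exact ⟨Finset.mem_univ _, Or.inr ⟨headT_eps1 tail head n i, htail⟩⟩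
  have := Finset.card_pos.mpr ⟨_, hmem⟩
  omega

lemma step_right (hBad : ∀ u ∈ S, ((rhsFilter tail head n S u).card : ℤ) ≤ inducedMD n w u)
    {e : E} {i : Fin (n e - 1)} (hchip : (w.mu e).val ≠ i.val + 1)
    (hS : Sum.inr ⟨e, i⟩ ∈ S) :
    headT tail head n ⟨e, ⟨i.val + 1, fin_lt2 n i⟩⟩ ∈ S := by
  have h0 : inducedMD n w (Sum.inr ⟨e, i⟩) = 0 := by simp [inducedMD, hchip]
  have hcard := hBad _ hS
  rw [h0] at hcard
  by_contra hhead
  have hmem : (⟨e, ⟨i.val + 1, fin_lt2 n i⟩⟩ : Σ e' : E, Fin (n e')) ∈ rhsFilter tail head n S (Sum.inr ⟨e, i⟩) := by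
    rw [rhsFilter, Finset.mem_filter]
    exact ⟨Finset.mem_univ _, Or.inl ⟨tailT_eps2 tail head n i, hhead⟩⟩
  have := Finset.card_pos.mpr ⟨_, hmem⟩
  omega

lemma prop_down (hBad : ∀ u ∈ S, ((rhsFilter tail head n S u).card : ℤ) ≤ inducedMD n w u)
    (e : E) :
    ∀ (i : ℕ) (h : i < n e - 1), (∀ k, k ≤ i → (w.mu e).val ≠ k + 1) →
      Sum.inr ⟨e, ⟨i, h⟩⟩ ∈ S → Sum.inl (tail e) ∈ S := by
  intro i
  induction i with
  | zero =>
    intro h hchip hS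
    have := step_left tail head n hBad (i := ⟨0, h⟩) (hchip 0 le_rfl) hS
    rwa [tailT_val_zero tail head n rfl] at this
  | succ i ih =>
    intro h hchip hS
    have hstep := step_left tail head n hBad (i := ⟨i + 1, h⟩) (hchip (i + 1) le_rfl) hS
    rw [tailT_val_pos tail head n (show ¬ (i + 1 = 0) by omega)
      (show i + 1 - 1 < n e - 1 by omega)] at hstep
    exact ih (by omega) (fun k hk => hchip k (by omega)) hstep

lemma prop_up_aux (hBad : ∀ u ∈ S, ((rhsFilter tail head n S u).card : ℤ) ≤ inducedMD n w u)
    (e : E) :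
    ∀ (d i : ℕ) (h : i < n e - 1), n e - 2 - i = d →
      (∀ k, i ≤ k → (w.mu e).val ≠ k + 1) →
      Sum.inr ⟨e, ⟨i, h⟩⟩ ∈ S → Sum.inl (head e) ∈ S := by
  intro d
  induction d with
  | zero =>
    intro i h hd hchip hS
    have hstep := step_right tail head n hBad (i := ⟨i, h⟩) (hchip i le_rfl) hS
    rwa [headT_val_last tail head n (show i + 1 = n e - 1 by omega)] at hstep
  | succ d ih =>
    intro i h hd hchip hS
    have hstep := step_right tail head n hBad (i := ⟨i, h⟩) (hchip i le_rfl) hS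
    rw [headT_val_ne tail head n (show ¬ (i + 1 = n e - 1) by omega)
      (show i + 1 < n e - 1 by omega)] at hstep
    exact ih (i + 1) (by omega) (by omega) (fun k hk => hchip k (by omega)) hstep

lemma prop_up (hBad : ∀ u ∈ S, ((rhsFilter tail head n S u).card : ℤ) ≤ inducedMD n w u)
    (e : E) (i : ℕ) (h : i < n e - 1) (hchip : ∀ k, i ≤ k → (w.mu e).val ≠ k + 1)
    (hS : Sum.inr ⟨e, ⟨i, h⟩⟩ ∈ S) : Sum.inl (head e) ∈ S :=
  prop_up_aux tail head n hBad e _ i h rfl hchip hS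

lemma exists_old (hBad : ∀ u ∈ S, ((rhsFilter tail head n S u).card : ℤ) ≤ inducedMD n w u)
    (hne : S.Nonempty) : ∃ v : V, Sum.inl v ∈ S := by
  obtain ⟨u, hu⟩ := hne
  obtain v | ⟨e, i⟩ := u
  · exact ⟨v, hu⟩
  rcases Nat.lt_trichotomy ((w.mu e).val) (i.val + 1) with hlt | heq | hgt
  · exact ⟨head e, prop_up tail head n hBad e i.val i.isLt (fun k hk => by omega) hu⟩
  · -- chip at (e, i)
    have hind : inducedMD n w (Sum.inr ⟨e, i⟩) = 1 := by simp [inducedMD, heq]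
    have hcard := hBad _ hu
    rw [hind] at hcard
    have hor : tailT tail head n ⟨e, ⟨i.val, fin_lt1 n i⟩⟩ ∈ S ∨
        headT tail head n ⟨e, ⟨i.val + 1, fin_lt2 n i⟩⟩ ∈ S := by
      by_contra hcon
      push_neg at hcon
      have m1 : (⟨e, ⟨i.val, fin_lt1 n i⟩⟩ : Σ e' : E, Fin (n e')) ∈
          rhsFilter tail head n S (Sum.inr ⟨e, i⟩) := by
        rw [rhsFilter, Finset.mem_filter]
        exact ⟨Finset.mem_univ _, Or.inr ⟨headT_eps1 tail head n i, hcon.1⟩⟩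
      have m2 : (⟨e, ⟨i.val + 1, fin_lt2 n i⟩⟩ : Σ e' : E, Fin (n e')) ∈
          rhsFilter tail head n S (Sum.inr ⟨e, i⟩) := by
        rw [rhsFilter, Finset.mem_filter]
        exact ⟨Finset.mem_univ _, Or.inl ⟨tailT_eps2 tail head n i, hcon.2⟩⟩
      have hne12 : (⟨e, ⟨i.val, fin_lt1 n i⟩⟩ : Σ e' : E, Fin (n e')) ≠
          ⟨e, ⟨i.val + 1, fin_lt2 n i⟩⟩ := by
        intro hh
        rw [Sigma.mk.inj_iff] at hh
        have := congrArg Fin.val (eq_of_heq hh.2)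
        simp only at this
        omega
      have hsub : ({⟨e, ⟨i.val, fin_lt1 n i⟩⟩, ⟨e, ⟨i.val + 1, fin_lt2 n i⟩⟩} :
          Finset (Σ e' : E, Fin (n e'))) ⊆ rhsFilter tail head n S (Sum.inr ⟨e, i⟩) := by
        intro x hx
        rcases Finset.mem_insert.mp hx with h | h
        · exact h ▸ m1
        · exact (Finset.mem_singleton.mp h) ▸ m2
      have h2 := Finset.card_le_card hsub
      rw [Finset.card_pair hne12] at h2
      omega
    rcases hor with htl | hhd
    · by_cases hi0 : i.val = 0
      · rw [tailT_val_zero tail head n hi0] at htl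
        exact ⟨tail e, htl⟩
      · rw [tailT_val_pos tail head n hi0 (show i.val - 1 < n e - 1 from by have := i.isLt; omega)] at htl
        exact ⟨tail e, prop_down tail head n hBad e (i.val - 1)
          (by have := i.isLt; omega) (fun k hk => by omega) htl⟩
    · by_cases hin : i.val + 1 = n e - 1
      · rw [headT_val_last tail head n hin] at hhd
        exact ⟨head e, hhd⟩
      · rw [headT_val_ne tail head n hin (show i.val + 1 < n e - 1 from by have := i.isLt; omega)] at hhd
        exact ⟨head e, prop_up tail head n hBad e (i.val + 1)
          (by have := i.isLt; omega) (fun k hk => by omega) hhd⟩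
  · exact ⟨tail e, prop_down tail head n hBad e i.val i.isLt (fun k hk => by omega) hu⟩

end Proof2
section Proof3

variable {V E : Type*} [Fintype V] [Fintype E] [DecidableEq V] [DecidableEq E]
variable (tail head : E → V) (n : E → ℕ)

lemma head?_eq_get_zero {l : List V} {v₀ : V} (h : l.head? = some v₀) (h0 : 0 < l.length) :
    l.get ⟨0, h0⟩ = v₀ := by
  cases l with
  | nil => simp at h
  | cons a l => simp only [List.head?_cons, Option.some.injEq] at h; simpa using h

lemma cond_to_rhs (hloop : Loopless tail head) (hn : ∀ e, 0 < n e) (w : AdmMD V E n) (v₀ : V)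
    (hc : Cond tail head n w v₀) :
    ∀ S : Finset (V ⊕ Σ e : E, Fin (n e - 1)), S.Nonempty → (Sum.inl v₀) ∉ S →
      ∃ u ∈ S, inducedMD n w u < ((rhsFilter tail head n S u).card : ℤ) := by
  intro S hSne hv₀
  by_contra hcon
  push_neg at hcon
  have hBad : ∀ u ∈ S, ((rhsFilter tail head n S u).card : ℤ) ≤ inducedMD n w u := hcon
  obtain ⟨l, hnd, hcompl, hhead, hcond⟩ := hc
  obtain ⟨v, hv⟩ := exists_old tail head n hBad hSne
  set I : Finset (Fin l.length) := Finset.univ.filter (fun j => Sum.inl (l.get j) ∈ S) with hI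
  have hIne : I.Nonempty := by
    obtain ⟨j, hj⟩ := List.mem_iff_get.mp (hcompl v)
    exact ⟨j, by rw [hI, Finset.mem_filter]; exact ⟨Finset.mem_univ _, by rw [hj]; exact hv⟩⟩
  set i := I.min' hIne with hidef
  have hiI : i ∈ I := I.min'_mem hIne
  have hiS : Sum.inl (l.get i) ∈ S := by simpa [hI, Finset.mem_filter] using hiI
  have hmin : ∀ j : Fin l.length, Sum.inl (l.get j) ∈ S → i ≤ j :=
    fun j hj => I.min'_le j (by rw [hI, Finset.mem_filter]; exact ⟨Finset.mem_univ _, hj⟩)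
  have hlen : 0 < l.length := lt_of_le_of_lt (Nat.zero_le i.val) i.isLt
  have hi0 : 0 < i.val := by
    by_contra h0
    push_neg at h0
    have hgv : l.get i = v₀ := by
      rw [show i = (⟨0, hlen⟩ : Fin l.length) from Fin.ext (show i.val = 0 from by omega)]
      exact head?_eq_get_zero hhead hlen
    exact hv₀ (hgv ▸ hiS)
  have hkey := hcond i.val i.isLt hi0
  set u := l.get ⟨i.val, i.isLt⟩ with hu
  have hnotake : ∀ x ∈ l.take i.val, Sum.inl x ∉ S := by
    intro x hx hxS
    rw [List.mem_take_iff_getElem] at hx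
    obtain ⟨j, hj, hje⟩ := hx
    have hj2 : j < i.val := lt_of_lt_of_le hj (min_le_left _ _)
    have hj' : j < l.length := lt_of_lt_of_le hj (min_le_right _ _)
    have hle := hmin ⟨j, hj'⟩ (by rw [List.get_eq_getElem]; rw [hje]; exact hxS)
    rw [Fin.le_def] at hle
    simp only at hle
    omega
  have hinj : ((Finset.univ.filter fun e : E => w.mu e = 0 ∧
        ((tail e = u ∧ head e ∈ l.take i.val) ∨
         (head e = u ∧ tail e ∈ l.take i.val))).card)
      ≤ (rhsFilter tail head n S (Sum.inl u)).card := by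
    apply Finset.card_le_card_of_injOn (fun e =>
      if tail e = u then (⟨e, ⟨0, hn e⟩⟩ : Σ e' : E, Fin (n e'))
      else ⟨e, ⟨n e - 1, by have := hn e; omega⟩⟩)
    · intro e he
      simp only [Finset.mem_coe] at he ⊢
      simp only [Finset.mem_filter] at he
      obtain ⟨-, hmu, hcase⟩ := he
      haveI : NeZero (n e) := ⟨(hn e).ne'⟩
      have hval : (w.mu e).val = 0 := (ZMod.val_eq_zero _).mpr hmu
      rcases hcase with ⟨h1, h2⟩ | ⟨h1, h2⟩
      · rw [if_pos h1, rhsFilter, Finset.mem_filter]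
        refine ⟨Finset.mem_univ _, Or.inl ⟨?_, ?_⟩⟩
        · exact (tailT_val_zero tail head n rfl).trans (by rw [h1])
        · by_cases hn1 : ((⟨0, hn e⟩ : Fin (n e)).val = n e - 1)
          · rw [headT_val_last tail head n hn1]
            exact hnotake _ h2
          · rw [headT_val_ne tail head n hn1
              (show (0 : ℕ) < n e - 1 from by simp only [Fin.val_mk] at hn1; omega)]
            intro hmem
            exact hnotake _ h2 (prop_up tail head n hBad e 0
              (by simp only [Fin.val_mk] at hn1; omega) (fun k _ => by omega) hmem)
      · have h1' : ¬ (tail e = u) := fun hh => hloop e (hh.trans h1.symm)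
        rw [if_neg h1', rhsFilter, Finset.mem_filter]
        refine ⟨Finset.mem_univ _, Or.inr ⟨?_, ?_⟩⟩
        · exact (headT_val_last tail head n rfl).trans (by rw [h1])
        · by_cases hn1 : ((⟨n e - 1, by have := hn e; omega⟩ : Fin (n e)).val = 0)
          · rw [tailT_val_zero tail head n hn1]
            exact hnotake _ h2
          · rw [tailT_val_pos tail head n hn1
              (show n e - 1 - 1 < n e - 1 from by simp only [Fin.val_mk] at hn1; omega)]
            intro hmem
            exact hnotake _ h2 (prop_down tail head n hBad e (n e - 1 - 1)
              (by simp only [Fin.val_mk] at hn1; omega) (fun k hk => by omega) hmem)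
    · intro e1 h1 e2 h2 heq
      have h := congrArg Sigma.fst heq
      dsimp only at h
      split_ifs at h <;> exact h
  have hfin := hBad (Sum.inl u) hiS
  have hieq : inducedMD n w (Sum.inl u) = w.wV u := rfl
  rw [hieq] at hfin
  have hc2 : (((Finset.univ.filter fun e : E => w.mu e = 0 ∧
        ((tail e = u ∧ head e ∈ l.take i.val) ∨
         (head e = u ∧ tail e ∈ l.take i.val))).card : ℤ))
      ≤ ((rhsFilter tail head n S (Sum.inl u)).card : ℤ) := by exact_mod_cast hinj
  linarith

end Proof3
section Proof4

variable {V E : Type*} [Fintype V] [Fintype E] [DecidableEq V] [DecidableEq E]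
variable (tail head : E → V) (n : E → ℕ)

/-- The "burnt region" determined by a set `T` of old vertices. -/
def inB (w : AdmMD V E n) (T : Finset V) : (V ⊕ Σ e : E, Fin (n e - 1)) → Prop
  | Sum.inl v => v ∈ T
  | Sum.inr p => (tail p.1 ∈ T ∧ head p.1 ∈ T) ∨
      (tail p.1 ∈ T ∧ ((w.mu p.1).val = 0 ∨ p.2.val + 1 < (w.mu p.1).val)) ∨
      (head p.1 ∈ T ∧ ((w.mu p.1).val = 0 ∨ (w.mu p.1).val ≤ p.2.val))

lemma next_vertex (hloop : Loopless tail head) (hn : ∀ e, 0 < n e) (w : AdmMD V E n) (v₀ : V)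
    (hrhs : ∀ S : Finset (V ⊕ Σ e : E, Fin (n e - 1)), S.Nonempty → (Sum.inl v₀) ∉ S →
      ∃ u ∈ S, inducedMD n w u < ((rhsFilter tail head n S u).card : ℤ))
    (T : Finset V) (hv₀T : v₀ ∈ T) (hT : T ≠ Finset.univ) :
    ∃ v : V, v ∉ T ∧ w.wV v < ((Finset.univ.filter fun e : E => w.mu e = 0 ∧
        ((tail e = v ∧ head e ∈ T) ∨ (head e = v ∧ tail e ∈ T))).card : ℤ) := by
  set S : Finset (V ⊕ Σ e : E, Fin (n e - 1)) :=
    Finset.univ.filter (fun u => ¬ inB tail head n w T u) with hSdef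
  have hmemS : ∀ u, u ∈ S ↔ ¬ inB tail head n w T u := by
    intro u; rw [hSdef, Finset.mem_filter]; simp
  have hnotS : ∀ u, u ∉ S ↔ inB tail head n w T u := by
    intro u; rw [hmemS]; exact not_not
  obtain ⟨v1, hv1⟩ : ∃ v1 : V, v1 ∉ T := by
    by_contra hcon; push_neg at hcon
    exact hT (Finset.eq_univ_iff_forall.mpr hcon)
  have hSne : S.Nonempty := ⟨Sum.inl v1, (hmemS _).mpr (by simp [inB, hv1])⟩
  have hv₀S : Sum.inl v₀ ∉ S := (hnotS _).mpr (by simp [inB, hv₀T])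
  obtain ⟨u, huS, hlt⟩ := hrhs S hSne hv₀S
  obtain v | ⟨e, i⟩ := u
  case inr =>
    exfalso
    have hnB := (hmemS _).mp huS
    simp only [inB] at hnB
    push_neg at hnB
    obtain ⟨hB1, hB2, hB3⟩ := hnB
    haveI : NeZero (n e) := ⟨(hn e).ne'⟩
    have hμlt : (w.mu e).val < n e := ZMod.val_lt (w.mu e)
    have hilt : i.val < n e - 1 := i.isLt
    -- F1 : under hypothesis, the left neighbour of (e,i) is in S
    have hF1 : (tail e ∉ T ∨ (w.mu e).val ≠ i.val + 1) →
        tailT tail head n ⟨e, ⟨i.val, fin_lt1 n i⟩⟩ ∈ S := by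
      intro hF
      by_cases h0 : i.val = 0
      · rw [tailT_val_zero tail head n (show (⟨i.val, fin_lt1 n i⟩ : Fin (n e)).val = 0 from h0)]
        rw [hmemS]
        simp only [inB]
        intro htl
        have := hB2 htl
        rcases hF with hF | hF
        · exact hF htl
        · omega
      · rw [tailT_val_pos tail head n h0 (show i.val - 1 < n e - 1 from by omega)]
        rw [hmemS]
        simp only [inB]
        intro hB
        rcases hB with ⟨h1', h2'⟩ | ⟨h1', h2'⟩ | ⟨h1', h2'⟩
        · have := hB2 h1'; have := hB3 h2'
          rcases hF with hF | hF
          · exact hF h1'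
          · omega
        · have := hB2 h1'
          try simp only [Fin.val_mk] at h2'
          rcases hF with hF | hF
          · exact hF h1'
          · omega
        · have := hB3 h1'
          try simp only [Fin.val_mk] at h2'
          omega
    -- F2 : under hypothesis, the right neighbour of (e,i) is in S
    have hF2 : (head e ∉ T ∨ (w.mu e).val ≠ i.val + 1) →
        headT tail head n ⟨e, ⟨i.val + 1, fin_lt2 n i⟩⟩ ∈ S := by
      intro hF
      by_cases h0 : i.val + 1 = n e - 1
      · rw [headT_val_last tail head n (show (⟨i.val + 1, fin_lt2 n i⟩ : Fin (n e)).val = n e - 1 from h0)]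
        rw [hmemS]
        simp only [inB]
        intro hhd
        have := hB3 hhd
        rcases hF with hF | hF
        · exact hF hhd
        · omega
      · rw [headT_val_ne tail head n h0 (show i.val + 1 < n e - 1 from by omega)]
        rw [hmemS]
        simp only [inB]
        intro hB
        rcases hB with ⟨h1', h2'⟩ | ⟨h1', h2'⟩ | ⟨h1', h2'⟩
        · have := hB2 h1'; have := hB3 h2'
          rcases hF with hF | hF
          · exact hF h2'
          · omega
        · have := hB2 h1'
          try simp only [Fin.val_mk] at h2'
          omega
        · have := hB3 h1'
          try simp only [Fin.val_mk] at h2'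
          rcases hF with hF | hF
          · exact hF h1'
          · omega
    have hne1 : tailT tail head n ⟨e, ⟨i.val, fin_lt1 n i⟩⟩ ≠ Sum.inr ⟨e, i⟩ := by
      by_cases h0 : i.val = 0
      · rw [tailT_val_zero tail head n (show (⟨i.val, fin_lt1 n i⟩ : Fin (n e)).val = 0 from h0)]
        simp
      · rw [tailT_val_pos tail head n h0 (show i.val - 1 < n e - 1 from by omega)]
        intro h
        have h' := Sum.inr.inj h
        rw [Sigma.mk.inj_iff] at h'
        have := congrArg Fin.val (eq_of_heq h'.2)
        simp only at this
        omega
    have hne2 : headT tail head n ⟨e, ⟨i.val + 1, fin_lt2 n i⟩⟩ ≠ Sum.inr ⟨e, i⟩ := by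
      by_cases h0 : i.val + 1 = n e - 1
      · rw [headT_val_last tail head n (show (⟨i.val + 1, fin_lt2 n i⟩ : Fin (n e)).val = n e - 1 from h0)]
        simp
      · rw [headT_val_ne tail head n h0 (show i.val + 1 < n e - 1 from by omega)]
        intro h
        have h' := Sum.inr.inj h
        rw [Sigma.mk.inj_iff] at h'
        have := congrArg Fin.val (eq_of_heq h'.2)
        simp only at this
        omega
    have hno1 : (tail e ∉ T ∨ (w.mu e).val ≠ i.val + 1) →
        (⟨e, ⟨i.val, fin_lt1 n i⟩⟩ : Σ e' : E, Fin (n e')) ∉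
          rhsFilter tail head n S (Sum.inr ⟨e, i⟩) := by
      intro hF hmem
      rw [rhsFilter, Finset.mem_filter] at hmem
      rcases hmem.2 with ⟨ht, _⟩ | ⟨_, ht⟩
      · exact hne1 ht
      · exact ht (hF1 hF)
    have hno2 : (head e ∉ T ∨ (w.mu e).val ≠ i.val + 1) →
        (⟨e, ⟨i.val + 1, fin_lt2 n i⟩⟩ : Σ e' : E, Fin (n e')) ∉
          rhsFilter tail head n S (Sum.inr ⟨e, i⟩) := by
      intro hF hmem
      rw [rhsFilter, Finset.mem_filter] at hmem
      rcases hmem.2 with ⟨_, hh⟩ | ⟨hh, _⟩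
      · exact hh (hF2 hF)
      · exact hne2 hh
    have hincl : ∀ x ∈ rhsFilter tail head n S (Sum.inr ⟨e, i⟩),
        x = ⟨e, ⟨i.val, fin_lt1 n i⟩⟩ ∨ x = ⟨e, ⟨i.val + 1, fin_lt2 n i⟩⟩ := by
      intro x hx
      rw [rhsFilter, Finset.mem_filter] at hx
      exact incident_mem tail head n (hx.2.imp (fun h => h.1) (fun h => h.1))
    by_cases hchip : (w.mu e).val = i.val + 1
    · -- chip at (e,i): induced = 1, so 1 < card; but card ≤ 1
      have hind : inducedMD n w (Sum.inr ⟨e, i⟩) = 1 := by simp [inducedMD, hchip]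
      rw [hind] at hlt
      have hcard : (rhsFilter tail head n S (Sum.inr ⟨e, i⟩)).card ≤ 1 := by
        by_cases htl : tail e ∈ T
        · have hsub : rhsFilter tail head n S (Sum.inr ⟨e, i⟩) ⊆
              {⟨e, ⟨i.val, fin_lt1 n i⟩⟩} := by
            intro x hx
            rcases hincl x hx with h | h
            · simp [h]
            · exact absurd (h ▸ hx) (hno2 (Or.inl (hB1 htl)))
          simpa using Finset.card_le_card hsub
        · have hsub : rhsFilter tail head n S (Sum.inr ⟨e, i⟩) ⊆
              {⟨e, ⟨i.val + 1, fin_lt2 n i⟩⟩} := by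
            intro x hx
            rcases hincl x hx with h | h
            · exact absurd (h ▸ hx) (hno1 (Or.inl htl))
            · simp [h]
          simpa using Finset.card_le_card hsub
      omega
    · have hind : inducedMD n w (Sum.inr ⟨e, i⟩) = 0 := by simp [inducedMD, hchip]
      rw [hind] at hlt
      have hcard : (rhsFilter tail head n S (Sum.inr ⟨e, i⟩)).card = 0 := by
        rw [Finset.card_eq_zero, Finset.eq_empty_iff_forall_notMem]
        intro x hx
        rcases hincl x hx with h | h
        · exact hno1 (Or.inr hchip) (h ▸ hx)
        · exact hno2 (Or.inr hchip) (h ▸ hx)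
      omega
  case inl =>
    have hvT : v ∉ T := by
      have := (hmemS _).mp huS
      simpa [inB] using this
    refine ⟨v, hvT, ?_⟩
    have hshape : ∀ (e : E) (j : Fin (n e)), (⟨e, j⟩ : Σ e' : E, Fin (n e')) ∈
          rhsFilter tail head n S (Sum.inl v) →
        (j.val = 0 ∧ tail e = v ∧ headT tail head n ⟨e, j⟩ ∉ S) ∨
        (j.val = n e - 1 ∧ head e = v ∧ tailT tail head n ⟨e, j⟩ ∉ S) := by
      intro e j hε
      rw [rhsFilter, Finset.mem_filter] at hε
      rcases hε.2 with ⟨ht, hh⟩ | ⟨hh, ht⟩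
      · left
        by_cases h0 : j.val = 0
        · rw [tailT_val_zero tail head n h0] at ht
          exact ⟨h0, Sum.inl.inj ht, hh⟩
        · rw [tailT_val_pos tail head n h0 (by have := j.isLt; omega)] at ht
          exact absurd ht (by simp)
      · right
        by_cases h0 : j.val = n e - 1
        · rw [headT_val_last tail head n h0] at hh
          exact ⟨h0, Sum.inl.inj hh, ht⟩
        · rw [headT_val_ne tail head n h0 (by have := j.isLt; omega)] at hh
          exact absurd hh (by simp)
    have hinj : (rhsFilter tail head n S (Sum.inl v)).card ≤
        ((Finset.univ.filter fun e : E => w.mu e = 0 ∧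
          ((tail e = v ∧ head e ∈ T) ∨ (head e = v ∧ tail e ∈ T))).card) := by
      apply Finset.card_le_card_of_injOn Sigma.fst
      · rintro ⟨e, j⟩ hε
        haveI : NeZero (n e) := ⟨(hn e).ne'⟩
        have hμlt : (w.mu e).val < n e := ZMod.val_lt (w.mu e)
        simp only [Finset.mem_coe, Finset.mem_filter, Finset.mem_univ, true_and]
        rcases hshape e j hε with ⟨h0, htv, hh⟩ | ⟨h0, hhv, ht⟩
        · rw [hnotS] at hh
          by_cases h1 : j.val = n e - 1
          · rw [headT_val_last tail head n h1] at hh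
            simp only [inB] at hh
            have hmu0 : w.mu e = 0 := (ZMod.val_eq_zero _).mp (by omega)
            exact ⟨hmu0, Or.inl ⟨htv, hh⟩⟩
          · rw [headT_val_ne tail head n h1 (by have := j.isLt; omega)] at hh
            simp only [inB, Fin.val_mk] at hh
            have hkey : head e ∈ T ∧ w.mu e = 0 := by
              rcases hh with ⟨h1', h2'⟩ | ⟨h1', h2'⟩ | ⟨h1', h2'⟩
              · exact absurd (htv ▸ h1') hvT
              · exact absurd (htv ▸ h1') hvT
              · exact ⟨h1', (ZMod.val_eq_zero _).mp (by omega)⟩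
            exact ⟨hkey.2, Or.inl ⟨htv, hkey.1⟩⟩
        · rw [hnotS] at ht
          by_cases h1 : j.val = 0
          · rw [tailT_val_zero tail head n h1] at ht
            simp only [inB] at ht
            have hmu0 : w.mu e = 0 := (ZMod.val_eq_zero _).mp (by omega)
            exact ⟨hmu0, Or.inr ⟨hhv, ht⟩⟩
          · rw [tailT_val_pos tail head n h1 (by have := j.isLt; omega)] at ht
            simp only [inB, Fin.val_mk] at ht
            have hkey : tail e ∈ T ∧ w.mu e = 0 := by
              rcases ht with ⟨h1', h2'⟩ | ⟨h1', h2'⟩ | ⟨h1', h2'⟩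
              · exact absurd (hhv ▸ h2') hvT
              · exact ⟨h1', (ZMod.val_eq_zero _).mp (by omega)⟩
              · exact absurd (hhv ▸ h1') hvT
            exact ⟨hkey.2, Or.inr ⟨hhv, hkey.1⟩⟩
      · rintro ⟨e1, j1⟩ h1 ⟨e2, j2⟩ h2 hfst
        have he : e1 = e2 := hfst
        subst he
        rcases hshape e1 j1 (Finset.mem_coe.mp h1) with ⟨ha, hb, -⟩ | ⟨ha, hb, -⟩ <;>
          rcases hshape e1 j2 (Finset.mem_coe.mp h2) with ⟨hc, hd, -⟩ | ⟨hc, hd, -⟩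
        · exact congrArg (Sigma.mk e1) (Fin.ext (by omega))
        · exact absurd (hb.trans hd.symm) (hloop e1)
        · exact absurd (hd.trans hb.symm) (hloop e1)
        · exact congrArg (Sigma.mk e1) (Fin.ext (by omega))
    have hieq : inducedMD n w (Sum.inl v) = w.wV v := rfl
    rw [hieq] at hlt
    have hc2 : ((rhsFilter tail head n S (Sum.inl v)).card : ℤ) ≤
        (((Finset.univ.filter fun e : E => w.mu e = 0 ∧
          ((tail e = v ∧ head e ∈ T) ∨ (head e = v ∧ tail e ∈ T))).card : ℤ)) := by
      exact_mod_cast hinj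
    linarith

end Proof4
section Proof5

variable {V E : Type*} [Fintype V] [Fintype E] [DecidableEq V] [DecidableEq E]
variable (tail head : E → V) (n : E → ℕ)

lemma build (hloop : Loopless tail head) (hn : ∀ e, 0 < n e) (w : AdmMD V E n) (v₀ : V)
    (hrhs : ∀ S : Finset (V ⊕ Σ e : E, Fin (n e - 1)), S.Nonempty → (Sum.inl v₀) ∉ S →
      ∃ u ∈ S, inducedMD n w u < ((rhsFilter tail head n S u).card : ℤ)) :
    ∀ (k : ℕ) (l : List V), l.Nodup → l.head? = some v₀ →
      (∀ (i : ℕ) (h : i < l.length), 0 < i →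
        w.wV (l.get ⟨i, h⟩) < ((Finset.univ.filter fun e : E => w.mu e = 0 ∧
          ((tail e = l.get ⟨i, h⟩ ∧ head e ∈ l.take i) ∨
           (head e = l.get ⟨i, h⟩ ∧ tail e ∈ l.take i))).card : ℤ)) →
      l.length + k = Fintype.card V → Cond tail head n w v₀ := by
  intro k
  induction k with
  | zero =>
    intro l hnd hhead hcondat hlen
    refine ⟨l, hnd, ?_, hhead, hcondat⟩
    have hcard : l.toFinset.card = Fintype.card V := by
      rw [List.toFinset_card_of_nodup hnd]; omega
    have huniv : l.toFinset = Finset.univ := Finset.eq_univ_of_card _ hcard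
    intro x
    rw [← List.mem_toFinset, huniv]
    exact Finset.mem_univ x
  | succ k ih =>
    intro l hnd hhead hcondat hlen
    have hv₀l : v₀ ∈ l := List.mem_of_mem_head? (by rw [hhead]; rfl)
    have hTne : l.toFinset ≠ Finset.univ := by
      intro hu
      have h1 : l.toFinset.card = l.length := List.toFinset_card_of_nodup hnd
      rw [hu, Finset.card_univ] at h1
      omega
    obtain ⟨v, hvT, hvlt⟩ := next_vertex tail head n hloop hn w v₀ hrhs l.toFinset
      (List.mem_toFinset.mpr hv₀l) hTne
    have hvl : v ∉ l := fun h => hvT (List.mem_toFinset.mpr h)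
    have htake : ∀ i ≤ l.length, (l ++ [v]).take i = l.take i := by
      intro i hi
      rw [List.take_append, Nat.sub_eq_zero_of_le hi, List.take_zero,
        List.append_nil]
    apply ih (l ++ [v]) ?_ ?_ ?_ ?_
    · rw [List.nodup_append]
      exact ⟨hnd, List.nodup_singleton v, by simpa using fun a (ha : a ∈ l) (h : a = v) => hvl (h ▸ ha)⟩
    · cases l with
      | nil => simp at hhead
      | cons a t => simpa using hhead
    · intro i h hi
      have hlen' : i < l.length + 1 := by
        rw [List.length_append, List.length_singleton] at h; exact h
      by_cases hcase : i < l.length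
      · have hget : (l ++ [v]).get ⟨i, h⟩ = l.get ⟨i, hcase⟩ := by
          simp only [List.get_eq_getElem]
          exact List.getElem_append_left hcase
        rw [hget, htake i (le_of_lt hcase)]
        exact hcondat i hcase hi
      · have hieq : i = l.length := by omega
        subst hieq
        have hget : (l ++ [v]).get ⟨l.length, h⟩ = v := by
          simp only [List.get_eq_getElem]
          exact List.getElem_concat_length rfl _
        rw [hget, htake l.length le_rfl, List.take_length]
        simpa using hvlt
    · rw [List.length_append, List.length_singleton]
      omega

lemma rhs_to_cond (hloop : Loopless tail head) (hn : ∀ e, 0 < n e) (w : AdmMD V E n) (v₀ : V)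
    (hrhs : ∀ S : Finset (V ⊕ Σ e : E, Fin (n e - 1)), S.Nonempty → (Sum.inl v₀) ∉ S →
      ∃ u ∈ S, inducedMD n w u < ((rhsFilter tail head n S u).card : ℤ)) :
    Cond tail head n w v₀ := by
  apply build tail head n hloop hn w v₀ hrhs (Fintype.card V - 1) [v₀]
    (List.nodup_singleton v₀) rfl
  · intro i h hi
    simp only [List.length_singleton] at h
    omega
  · have : 0 < Fintype.card V := Fintype.card_pos_iff.mpr ⟨v₀⟩
    simp only [List.length_singleton]
    omega

end Proof5
/-- an admissible multidegree is concentrated at `v₀` iff its induced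
multidegree `w̃` on `Γ̃` satisfies: for every nonempty `S ⊆ V(Γ̃)∖{v₀}` there is `u ∈ S`
with `w̃(u)` strictly smaller than the number of edges of `Γ̃` from `u` to `V(Γ̃)∖S`. -/
theorem statement_4 {V E : Type*} [Fintype V] [Fintype E] [DecidableEq V] [DecidableEq E]
    (tail head : E → V) (n : E → ℕ)
    (hloop : Loopless tail head) (hconn : MGConnected tail head)
    (hn : ∀ e, 0 < n e)
    (w : AdmMD V E n) (v₀ : V) :
    Concentrated tail head n w v₀ ↔
      ∀ S : Finset (V ⊕ Σ e : E, Fin (n e - 1)), S.Nonempty → (Sum.inl v₀) ∉ S →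
        ∃ u ∈ S, inducedMD n w u <
          ((Finset.univ.filter fun ε : Σ e : E, Fin (n e) =>
            (tailT tail head n ε = u ∧ headT tail head n ε ∉ S) ∨
            (headT tail head n ε = u ∧ tailT tail head n ε ∉ S)).card : ℤ) := by
  rw [concentrated_iff_cond tail head n hloop w v₀]
  constructor
  · intro hc S h1 h2
    obtain ⟨u, hu, hlt⟩ := cond_to_rhs tail head n hloop hn w v₀ hc S h1 h2
    exact ⟨u, hu, hlt⟩
  · intro hr
    apply rhs_to_cond tail head n hloop hn w v₀
    intro S h1 h2
    obtain ⟨u, hu, hlt⟩ := hr S h1 h2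
    exact ⟨u, hu, hlt⟩

end LLS
end

section
/- If a multidegree D on the subdivided graph Γ̃ is v-reduced for some vertex v ∈ V(Γ), then D is admissible; that is, D is the induced multidegree of an admissible multidegree on (Γ, 𝐧): for every edge e of Γ, the values of D on the 𝐧(e)−1 new vertices over e are all 0 or 1, with the value 1 occurring at most once. -/
open scoped Classical

namespace LLS

variable {V E : Type*}

section Aux

variable {V E : Type*} [Fintype V] [Fintype E] [DecidableEq V] [DecidableEq E]

lemma inr_inj' {n : E → ℕ} {e e' : E} {k : Fin (n e - 1)} {k' : Fin (n e' - 1)}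
    (h : (Sum.inr ⟨e, k⟩ : V ⊕ Σ e : E, Fin (n e - 1)) = Sum.inr ⟨e', k'⟩) :
    e = e' ∧ (k : ℕ) = (k' : ℕ) := by
  have h2 : (⟨e, k⟩ : Σ e : E, Fin (n e - 1)) = ⟨e', k'⟩ := Sum.inr.inj h
  obtain ⟨rfl, h4⟩ := Sigma.mk.inj_iff.mp h2
  exact ⟨rfl, congrArg Fin.val (heq_iff_eq.mp h4)⟩

lemma key_interval (tail head : E → V) (n : E → ℕ)
    (D : (V ⊕ Σ e : E, Fin (n e - 1)) → ℤ) (v : V)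
    (hred : VReduced (tailT tail head n) (headT tail head n) D (Sum.inl v))
    (e : E) (a b : ℕ) (hab : a ≤ b) (hb : b < n e - 1) :
    ∃ (m : ℕ) (hm : m < n e - 1), a ≤ m ∧ m ≤ b ∧
      D (Sum.inr ⟨e, ⟨m, hm⟩⟩) <
        (if m = a then 1 else 0) + (if m = b then 1 else 0) := by
  classical
  set S : Finset (V ⊕ Σ e : E, Fin (n e - 1)) :=
    (((Finset.univ : Finset (Fin (n e - 1))).filter
      fun k : Fin (n e - 1) => a ≤ (k : ℕ) ∧ (k : ℕ) ≤ b).image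
      fun k => Sum.inr ⟨e, k⟩) with hSdef
  have hmemS : ∀ (e' : E) (k : Fin (n e' - 1)),
      (Sum.inr ⟨e', k⟩ : V ⊕ Σ e : E, Fin (n e - 1)) ∈ S ↔
        e' = e ∧ a ≤ (k : ℕ) ∧ (k : ℕ) ≤ b := by
    intro e' k
    simp only [hSdef, Finset.mem_image, Finset.mem_filter, Finset.mem_univ, true_and]
    constructor
    · rintro ⟨k', hk', heq⟩
      obtain ⟨rfl, hv⟩ := inr_inj' heq
      exact ⟨rfl, by omega⟩
    · rintro ⟨rfl, h1, h2⟩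
      exact ⟨k, ⟨h1, h2⟩, rfl⟩
  have hvS : (Sum.inl v : V ⊕ Σ e : E, Fin (n e - 1)) ∉ S := by
    simp [hSdef]
  have hSne : S.Nonempty :=
    ⟨Sum.inr ⟨e, ⟨a, by omega⟩⟩, (hmemS e ⟨a, by omega⟩).mpr ⟨rfl, le_refl a, hab⟩⟩
  obtain ⟨u, huS, hu⟩ := hred.2 S hSne hvS
  simp only [hSdef, Finset.mem_image, Finset.mem_filter, Finset.mem_univ, true_and]
    at huS
  obtain ⟨k, ⟨h1, h2⟩, rfl⟩ := huS
  set m : ℕ := (k : ℕ) with hmdef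
  have hmlt : m < n e - 1 := k.isLt
  have hm1lt : m + 1 < n e := by omega
  set fm : Σ e : E, Fin (n e) := ⟨e, ⟨m, by omega⟩⟩ with hfm
  set fm1 : Σ e : E, Fin (n e) := ⟨e, ⟨m + 1, hm1lt⟩⟩ with hfm1
  have hsub : (Finset.univ.filter fun f : Σ e : E, Fin (n e) =>
      (tailT tail head n f = Sum.inr ⟨e, k⟩ ∧ headT tail head n f ∉ S) ∨
      (headT tail head n f = Sum.inr ⟨e, k⟩ ∧ tailT tail head n f ∉ S)) ⊆
      ((if m = a then {fm} else ∅) ∪ (if m = b then {fm1} else ∅)) := by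
    intro f hf
    obtain ⟨-, hf⟩ := Finset.mem_filter.mp hf
    obtain ⟨e', kf⟩ := f
    rcases hf with ⟨ht, hh⟩ | ⟨hh, ht⟩
    · -- tail of f is the vertex (e, m): f = (e, m+1), and m = b
      unfold tailT at ht
      by_cases h0 : (kf : ℕ) = 0
      · rw [dif_pos h0] at ht; exact absurd ht (by simp)
      rw [dif_neg h0] at ht
      obtain ⟨he, hv⟩ := inr_inj' ht
      dsimp only at he hv
      subst e'
      -- cleaned
      have hkf : (kf : ℕ) = m + 1 := by omega
      have hmb : m = b := by
        unfold headT at hh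
        by_cases hl : (kf : ℕ) = n e - 1
        · omega
        rw [dif_neg hl] at hh
        by_contra hmb'
        exact hh ((hmemS e ⟨(kf : ℕ), by omega⟩).mpr
          ⟨rfl, by show a ≤ (kf : ℕ); omega, by show (kf : ℕ) ≤ b; omega⟩)
      have hfeq : (⟨e, kf⟩ : Σ e : E, Fin (n e)) = fm1 := by
        rw [hfm1]; exact congrArg (Sigma.mk e) (Fin.ext hkf)
      rw [Finset.mem_union, if_pos hmb]
      right; simp [hfeq]
    · -- head of f is the vertex (e, m): f = (e, m), and m = a
      unfold headT at hh
      by_cases hl : (kf : ℕ) = n e' - 1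
      · rw [dif_pos hl] at hh; exact absurd hh (by simp)
      rw [dif_neg hl] at hh
      obtain ⟨he, hv⟩ := inr_inj' hh
      dsimp only at he hv
      subst e'
      -- cleaned
      have hma : m = a := by
        unfold tailT at ht
        by_cases h0 : (kf : ℕ) = 0
        · omega
        rw [dif_neg h0] at ht
        by_contra hma'
        exact ht ((hmemS e ⟨(kf : ℕ) - 1, by omega⟩).mpr
          ⟨rfl, by show a ≤ (kf : ℕ) - 1; omega, by show (kf : ℕ) - 1 ≤ b; omega⟩)
      have hfeq : (⟨e, kf⟩ : Σ e : E, Fin (n e)) = fm := by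
        rw [hfm]; exact congrArg (Sigma.mk e) (Fin.ext hv)
      rw [Finset.mem_union, if_pos hma]
      left; simp [hfeq]
  have hcard := Finset.card_le_card hsub
  have hcard2 : ((if m = a then ({fm} : Finset (Σ e : E, Fin (n e))) else ∅) ∪
      (if m = b then {fm1} else ∅)).card ≤
      (if m = a then 1 else 0) + (if m = b then 1 else 0) := by
    refine le_trans (Finset.card_union_le _ _) ?_
    gcongr <;> split_ifs <;> simp
  have hle : (((Finset.univ.filter fun f : Σ e : E, Fin (n e) =>
      (tailT tail head n f = Sum.inr ⟨e, k⟩ ∧ headT tail head n f ∉ S) ∨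
      (headT tail head n f = Sum.inr ⟨e, k⟩ ∧ tailT tail head n f ∉ S)).card : ℤ)) ≤
      (if m = a then 1 else 0) + (if m = b then 1 else 0) := by
    have := le_trans hcard hcard2
    split_ifs at this ⊢ <;> exact_mod_cast this
  exact ⟨m, hmlt, h1, h2, lt_of_lt_of_le hu hle⟩

end Aux

/-- a multidegree on `Γ̃` which is `v`-reduced for some `v ∈ V(Γ)` is
admissible: on the new vertices over each edge it takes only values `0` and `1`, with
`1` occurring at most once, i.e. it is induced by an admissible multidegree. -/
theorem statement_7 {V E : Type*} [Fintype V] [Fintype E] [DecidableEq V] [DecidableEq E]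
    (tail head : E → V) (n : E → ℕ)
    (hloop : Loopless tail head) (hconn : MGConnected tail head)
    (hn : ∀ e, 0 < n e)
    (D : (V ⊕ Σ e : E, Fin (n e - 1)) → ℤ) (v : V)
    (hred : VReduced (tailT tail head n) (headT tail head n) D (Sum.inl v)) :
    (∀ (e : E) (i : Fin (n e - 1)),
        D (Sum.inr ⟨e, i⟩) = 0 ∨ D (Sum.inr ⟨e, i⟩) = 1) ∧
    (∀ (e : E) (i j : Fin (n e - 1)),
        D (Sum.inr ⟨e, i⟩) = 1 → D (Sum.inr ⟨e, j⟩) = 1 → i = j) ∧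
    (∃ w : AdmMD V E n, inducedMD n w = D) := by
  classical
  have hpos : ∀ (e : E) (i : Fin (n e - 1)), 0 ≤ D (Sum.inr ⟨e, i⟩) :=
    fun e i => hred.1 _ (by simp)
  have h01 : ∀ (e : E) (i : Fin (n e - 1)),
      D (Sum.inr ⟨e, i⟩) = 0 ∨ D (Sum.inr ⟨e, i⟩) = 1 := by
    intro e i
    obtain ⟨m, hm, h1, h2, hlt⟩ := key_interval tail head n D v hred e
      (i : ℕ) (i : ℕ) le_rfl i.isLt
    have hmi : m = (i : ℕ) := le_antisymm h2 h1
    have hfin : (⟨m, hm⟩ : Fin (n e - 1)) = i := Fin.ext hmi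
    rw [hfin, if_pos hmi] at hlt
    have := hpos e i
    omega
  have huniq : ∀ (e : E) (i j : Fin (n e - 1)),
      D (Sum.inr ⟨e, i⟩) = 1 → D (Sum.inr ⟨e, j⟩) = 1 → i = j := by
    have haux : ∀ (e : E) (i j : Fin (n e - 1)), (i : ℕ) < (j : ℕ) →
        D (Sum.inr ⟨e, i⟩) = 1 → D (Sum.inr ⟨e, j⟩) = 1 → False := by
      intro e i j hij hi hj
      obtain ⟨m, hm, h1, h2, hlt⟩ := key_interval tail head n D v hred e
        (i : ℕ) (j : ℕ) (le_of_lt hij) j.isLt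
      by_cases hma : m = (i : ℕ)
      · have hfin : (⟨m, hm⟩ : Fin (n e - 1)) = i := Fin.ext hma
        rw [hfin, hi, if_pos hma, if_neg (by omega)] at hlt
        omega
      by_cases hmb : m = (j : ℕ)
      · have hfin : (⟨m, hm⟩ : Fin (n e - 1)) = j := Fin.ext hmb
        rw [hfin, hj, if_neg hma, if_pos hmb] at hlt
        omega
      · rw [if_neg hma, if_neg hmb] at hlt
        have := hpos e ⟨m, hm⟩
        omega
    intro e i j hi hj
    rcases lt_trichotomy (i : ℕ) (j : ℕ) with h | h | h
    · exact absurd (haux e i j h hi hj) (by simp)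
    · exact Fin.ext h
    · exact absurd (haux e j i h hj hi) (by simp)
  refine ⟨h01, huniq, ?_⟩
  refine ⟨⟨fun u => D (Sum.inl u), fun e =>
    if h : ∃ i : Fin (n e - 1), D (Sum.inr ⟨e, i⟩) = 1
    then (((h.choose : ℕ) + 1 : ℕ) : ZMod (n e)) else 0⟩, ?_⟩
  funext u
  cases u with
  | inl u => rfl
  | inr p =>
    obtain ⟨e, i⟩ := p
    haveI : NeZero (n e) := ⟨(hn e).ne'⟩
    simp only [inducedMD]
    by_cases h : ∃ k : Fin (n e - 1), D (Sum.inr ⟨e, k⟩) = 1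
    · simp only [dif_pos h]
      set j := h.choose with hj
      have hjD : D (Sum.inr ⟨e, j⟩) = 1 := h.choose_spec
      have hval : (((j : ℕ) + 1 : ℕ) : ZMod (n e)).val = (j : ℕ) + 1 :=
        ZMod.val_natCast_of_lt (by have := j.isLt; omega)
      rw [hval]
      by_cases hij : i = j
      · subst hij
        rw [if_pos rfl, hjD]
      · rw [if_neg (fun hc => hij (Fin.ext (by omega)))]
        rcases h01 e i with h0 | h1
        · exact h0.symm
        · exact absurd (huniq e i j h1 hjD) hij
    · simp only [dif_neg h]
      have : (0 : ZMod (n e)).val = 0 := ZMod.val_zero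
      rw [this, if_neg (by omega)]
      rcases h01 e i with h0 | h1
      · exact h0.symm
      · exact absurd ⟨i, h1⟩ h

end LLS
end
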